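/- arXiv:2011.10146 — 3 statements merged into one kernel-verified Lean document; each statement's English description precedes it below -/
import Mathlib

section
/- Let (Ω, T, μ) be a topologically mixing subshift of finite type with μ a T-ergodic probability measure having the bounded distortion property, and let f be α-Hölder continuous on Ω. Then for every ε > 0 there exist constants C, c > 0 such that for all n ≥ 1: μ{ω ∈ Ω : |(1/n)Σ_{k=0}^{n-1} f(T^k ω) − ∫ f dμ| ≥ ε} < C e^{-cn}. -/
open MeasureTheory
open scoped Classical NNReal ENNReal

def shift {A : Type*} (ω : ℤ → A) : ℤ → A := fun n => ω (n + 1)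

def cylinder {A : Type*} (n : ℤ) (w : List A) : Set (ℤ → A) :=
  {ω | ∀ i : Fin w.length, ω (n + (i : ℕ)) = w.get i}

noncomputable def shiftDist {A : Type*} (ω ω' : ℤ → A) : ℝ :=
  if ω = ω' then 0
  else Real.exp (-((sSup {N : ℕ | ∀ n : ℤ, |n| < (N : ℤ) → ω n = ω' n} : ℕ) : ℝ))

set_option linter.unusedSectionVars false
set_option maxHeartbeats 2000000
set_option synthInstance.maxHeartbeats 1000000

open Filter Topology

namespace LDE
variable {A : Type*} [Fintype A] [MeasurableSpace A] [MeasurableSingletonClass A]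

def cyl (n : ℤ) {N : ℕ} (w : Fin N → A) : Set (ℤ → A) :=
  {ω | ∀ i : Fin N, ω (n + (i : ℕ)) = w i}

def Det (a b : ℤ) (S : Set (ℤ → A)) : Prop :=
  ∀ ω ω' : ℤ → A, (∀ i : ℤ, a ≤ i → i ≤ b → ω i = ω' i) → (ω ∈ S ↔ ω' ∈ S)

lemma Det.mono {a b a' b' : ℤ} {S : Set (ℤ → A)} (h : Det a b S) (ha : a' ≤ a) (hb : b ≤ b') :
    Det a' b' S := fun ω ω' hag => h ω ω' fun i h1 h2 => hag i (ha.trans h1) (h2.trans hb)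

lemma det_biInter {a b : ℤ} {t : Finset ℕ} {S : ℕ → Set (ℤ → A)}
    (h : ∀ i ∈ t, Det a b (S i)) : Det a b (⋂ i ∈ t, S i) := by
  intro ω ω' hag
  simp only [Set.mem_iInter]
  exact forall_congr' fun i => forall_congr' fun hi => h i hi ω ω' hag

lemma measurableSet_cyl {n : ℤ} {N : ℕ} (w : Fin N → A) : MeasurableSet (cyl n w) := by
  have : cyl n w = ⋂ i : Fin N, (fun ω : ℤ → A => ω (n + (i : ℕ))) ⁻¹' {w i} := by
    ext ω; simp [cyl]
  rw [this]
  exact MeasurableSet.iInter fun i => (measurable_pi_apply _) (measurableSet_singleton _)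

lemma cyl_disjoint {n : ℤ} {N : ℕ} : Pairwise (Function.onFun Disjoint (fun w : Fin N → A => cyl n w)) := by
  intro w v hwv
  refine Set.disjoint_left.2 fun ω hw hv => hwv ?_
  funext i
  rw [← hw i, ← hv i]

lemma sum_measure_inter_cyl (μ : Measure (ℤ → A)) {n : ℤ} {N : ℕ} {B : Set (ℤ → A)}
    (hB : MeasurableSet B) : ∑ w : Fin N → A, μ (cyl n w ∩ B) = μ B := by
  have hcover : B = ⋃ w : Fin N → A, cyl n w ∩ B := by
    ext ω
    constructor
    · intro hω
      exact Set.mem_iUnion.2 ⟨fun i => ω (n + (i : ℕ)), fun i => rfl, hω⟩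
    · rintro hω
      rcases Set.mem_iUnion.1 hω with ⟨w, -, h⟩
      exact h
  conv_rhs => rw [hcover]
  rw [measure_iUnion ?_ fun w => (measurableSet_cyl w).inter hB, tsum_fintype]
  exact fun w v hwv => (cyl_disjoint hwv).mono Set.inter_subset_left Set.inter_subset_left

lemma det_cyl_cases {a b n : ℤ} {N : ℕ} {S : Set (ℤ → A)} (hS : Det a b S)
    (hcov : ∀ i : ℤ, a ≤ i → i ≤ b → n ≤ i ∧ i < n + N) (w : Fin N → A) :
    cyl n w ∩ S = cyl n w ∨ cyl n w ∩ S = ∅ := by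
  by_cases h : (cyl n w ∩ S).Nonempty
  · left
    rcases h with ⟨ω₀, hω₀c, hω₀S⟩
    refine Set.inter_eq_left.2 fun ω hω => ?_
    refine (hS ω₀ ω ?_).1 hω₀S
    intro i h1 h2
    obtain ⟨hn, hN⟩ := hcov i h1 h2
    have hj : (i - n).toNat < N := by omega
    have hi : i = n + (((⟨(i - n).toNat, hj⟩ : Fin N) : ℕ) : ℤ) := by
      simp only [Fin.val_mk]
      omega
    rw [hi, hω₀c, hω ⟨(i-n).toNat, hj⟩]
  · right; exact Set.not_nonempty_iff_eq_empty.1 h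

section Measure
variable (μ : Measure (ℤ → A)) [IsProbabilityMeasure μ] (C₀ : ℝ≥0)

/-- the basic separated-cylinder estimate, abstracted. -/
def Sep : Prop :=
  ∀ (n l : ℤ) (N M : ℕ) (w : Fin N → A) (v : Fin M → A), n + N ≤ l →
    μ (cyl n w ∩ cyl l v) ≤ C₀ * (μ (cyl n w) * μ (cyl l v))

variable {μ C₀}

lemma det_sep (hsep : Sep μ C₀) {S T : Set (ℤ → A)} {a₁ b₁ a₂ b₂ : ℤ}
    (hS : MeasurableSet S) (hT : MeasurableSet T)
    (hdS : Det a₁ b₁ S) (hdT : Det a₂ b₂ T) (h1 : b₁ < a₂) (h2 : a₁ ≤ a₂) :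
    μ (S ∩ T) ≤ C₀ * (μ S * μ T) := by
  set N₁ : ℕ := (b₁ + 1 - a₁).toNat with hN₁
  set N₂ : ℕ := (b₂ + 1 - a₂).toNat with hN₂
  have hcov₁ : ∀ i : ℤ, a₁ ≤ i → i ≤ b₁ → a₁ ≤ i ∧ i < a₁ + N₁ := by intro i h h'; omega
  have hcov₂ : ∀ i : ℤ, a₂ ≤ i → i ≤ b₂ → a₂ ≤ i ∧ i < a₂ + N₂ := by intro i h h'; omega
  have hNl : a₁ + (N₁ : ℤ) ≤ a₂ := by omega
  -- step 1
  have step1 : ∀ w : Fin N₁ → A, μ (cyl a₁ w ∩ T) ≤ C₀ * (μ (cyl a₁ w) * μ T) := by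
    intro w
    have hperv : ∀ v : Fin N₂ → A,
        μ (cyl a₂ v ∩ (cyl a₁ w ∩ T)) ≤ C₀ * (μ (cyl a₁ w) * μ (cyl a₂ v ∩ T)) := by
      intro v
      rcases det_cyl_cases hdT hcov₂ v with hfull | hempty
      · rw [Set.inter_left_comm, hfull]
        exact hsep a₁ a₂ N₁ N₂ w v hNl
      · have : cyl a₂ v ∩ (cyl a₁ w ∩ T) = ∅ := by
          rw [← Set.inter_assoc, Set.inter_comm (cyl a₂ v), Set.inter_assoc, hempty, Set.inter_empty]
        rw [this]; simp
    calc μ (cyl a₁ w ∩ T)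
        = ∑ v : Fin N₂ → A, μ (cyl a₂ v ∩ (cyl a₁ w ∩ T)) :=
          (sum_measure_inter_cyl μ ((measurableSet_cyl w).inter hT)).symm
      _ ≤ ∑ v : Fin N₂ → A, C₀ * (μ (cyl a₁ w) * μ (cyl a₂ v ∩ T)) :=
          Finset.sum_le_sum fun v _ => hperv v
      _ = C₀ * (μ (cyl a₁ w) * μ T) := by
          rw [← Finset.mul_sum, ← Finset.mul_sum, sum_measure_inter_cyl μ hT]
  -- step 2
  have step2 : ∀ w : Fin N₁ → A,
      μ (cyl a₁ w ∩ (S ∩ T)) ≤ C₀ * (μ (cyl a₁ w ∩ S) * μ T) := by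
    intro w
    rcases det_cyl_cases hdS hcov₁ w with hfull | hempty
    · have : cyl a₁ w ∩ (S ∩ T) = cyl a₁ w ∩ T := by
        rw [← Set.inter_assoc, hfull]
      rw [this, hfull]
      exact step1 w
    · have : cyl a₁ w ∩ (S ∩ T) = ∅ := by
        rw [← Set.inter_assoc, hempty]; simp
      rw [this, hempty]; simp
  calc μ (S ∩ T)
      = ∑ w : Fin N₁ → A, μ (cyl a₁ w ∩ (S ∩ T)) :=
        (sum_measure_inter_cyl μ (hS.inter hT)).symm
    _ ≤ ∑ w : Fin N₁ → A, C₀ * (μ (cyl a₁ w ∩ S) * μ T) :=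
        Finset.sum_le_sum fun w _ => step2 w
    _ = C₀ * (μ S * μ T) := by
        rw [← Finset.mul_sum, ← Finset.sum_mul, sum_measure_inter_cyl μ hS]

lemma det_sep_iInter (hC₀ : 1 ≤ C₀) (hsep : Sep μ C₀) {S : ℕ → Set (ℤ → A)} {w₁ w₂ : ℕ → ℤ}
    (hmeas : ∀ i, MeasurableSet (S i)) (hdet : ∀ i, Det (w₁ i) (w₂ i) (S i))
    (hle : ∀ i, w₁ i ≤ w₂ i) (hsepw : ∀ i j, i < j → w₂ i < w₁ j) :
    ∀ t : Finset ℕ, μ (⋂ i ∈ t, S i) ≤ (C₀ : ℝ≥0∞) ^ t.card * ∏ i ∈ t, μ (S i) := by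
  have hone : (1 : ℝ≥0∞) ≤ (C₀ : ℝ≥0∞) := by exact_mod_cast hC₀
  have hw₁mono : ∀ i j, i ≤ j → w₁ i ≤ w₁ j := by
    intro i j hij
    rcases eq_or_lt_of_le hij with rfl | h
    · exact le_rfl
    · exact le_of_lt ((hle i).trans_lt (hsepw i j h))
  have hw₂mono : ∀ i j, i ≤ j → w₂ i ≤ w₂ j := by
    intro i j hij
    rcases eq_or_lt_of_le hij with rfl | h
    · exact le_rfl
    · exact le_of_lt ((hsepw i j h).trans_le (hle j))
  intro t
  induction t using Finset.strongInduction with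
  | _ t ih =>
    rcases t.eq_empty_or_nonempty with rfl | hne
    · simp
    set M₀ := t.max' hne with hM₀
    have hM₀mem : M₀ ∈ t := t.max'_mem hne
    set t' := t.erase M₀ with ht'
    have hins : insert M₀ t' = t := Finset.insert_erase hM₀mem
    have hsub : t' ⊂ t := Finset.erase_ssubset hM₀mem
    have hMnot : M₀ ∉ t' := Finset.notMem_erase _ _
    have hrw : (⋂ i ∈ t, S i) = (⋂ i ∈ t', S i) ∩ S M₀ := by
      rw [← hins, Finset.set_biInter_insert, Set.inter_comm]
    have hcard : t.card = t'.card + 1 := by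
      rw [← hins, Finset.card_insert_of_notMem hMnot]
    have hprod : ∏ i ∈ t, μ (S i) = μ (S M₀) * ∏ i ∈ t', μ (S i) := by
      rw [← hins, Finset.prod_insert hMnot]
    rcases t'.eq_empty_or_nonempty with h' | hne'
    · rw [hrw, h']
      simp only [Finset.notMem_empty, Set.iInter_of_empty, Set.iInter_univ, Set.univ_inter]
      rw [hcard, h']
      simp only [Finset.card_empty, zero_add, pow_one, hprod, h', Finset.prod_empty, mul_one]
      exact le_mul_of_one_le_left zero_le hone
    · have hdet' : Det (w₁ (t'.min' hne')) (w₂ (t'.max' hne')) (⋂ i ∈ t', S i) := by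
        refine det_biInter fun i hi => (hdet i).mono ?_ ?_
        · exact hw₁mono _ _ (t'.min'_le i hi)
        · exact hw₂mono _ _ (t'.le_max' i hi)
      have hmax'lt : t'.max' hne' < M₀ := by
        have h1 : t'.max' hne' ∈ t' := t'.max'_mem hne'
        have h2 : t'.max' hne' ≠ M₀ := Finset.ne_of_mem_erase h1
        have h3 : t'.max' hne' ≤ M₀ := t.le_max' _ (Finset.mem_of_mem_erase h1)
        omega
      have hmeas' : MeasurableSet (⋂ i ∈ t', S i) :=
        MeasurableSet.biInter (Set.to_countable _) fun i _ => hmeas i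
      have key : μ ((⋂ i ∈ t', S i) ∩ S M₀) ≤ C₀ * (μ (⋂ i ∈ t', S i) * μ (S M₀)) := by
        refine det_sep hsep hmeas' (hmeas M₀) hdet' (hdet M₀) (hsepw _ _ hmax'lt) ?_
        exact hw₁mono _ _ (le_of_lt (lt_of_le_of_lt (t'.min'_le _ (t'.max'_mem hne')) hmax'lt))
      calc μ (⋂ i ∈ t, S i) = μ ((⋂ i ∈ t', S i) ∩ S M₀) := by rw [hrw]
        _ ≤ C₀ * (μ (⋂ i ∈ t', S i) * μ (S M₀)) := key
        _ ≤ C₀ * (((C₀ : ℝ≥0∞) ^ t'.card * ∏ i ∈ t', μ (S i)) * μ (S M₀)) := by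
            exact mul_le_mul_right (mul_le_mul_left (ih t' hsub) _) _
        _ = (C₀ : ℝ≥0∞) ^ t.card * ∏ i ∈ t, μ (S i) := by
            rw [hcard, hprod, pow_succ]
            ring
end Measure

lemma sum_range_mul {M : Type*} [AddCommMonoid M] (F : ℕ → M) (q L : ℕ) :
    ∑ j ∈ Finset.range (q * L), F j = ∑ i ∈ Finset.range q, ∑ k ∈ Finset.range L, F (i * L + k) := by
  induction q with
  | zero => simp
  | succ q ih =>
    have h1 : (q + 1) * L = q * L + L := by ring
    rw [Finset.sum_range_succ, ← ih]
    rw [h1, Finset.range_eq_Ico,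
      ← Finset.sum_Ico_consecutive F (Nat.zero_le (q * L)) (Nat.le_add_right (q * L) L)]
    congr 1
    · rw [Finset.range_eq_Ico]
    rw [Finset.sum_Ico_eq_sum_range]
    have h2 : q * L + L - q * L = L := by omega
    rw [h2, Finset.range_eq_Ico]

lemma shiftDist_nonneg {A : Type*} (ω ω' : ℤ → A) : 0 ≤ shiftDist ω ω' := by
  unfold shiftDist
  split_ifs
  · exact le_refl 0
  · exact (Real.exp_pos _).le

lemma shiftDist_le {A : Type*} (ω ω' : ℤ → A) (m : ℕ)
    (hagree : ∀ n : ℤ, |n| ≤ (m : ℤ) → ω n = ω' n) :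
    shiftDist ω ω' ≤ Real.exp (-((m : ℝ) + 1)) := by
  unfold shiftDist
  split_ifs with h
  · exact (Real.exp_pos _).le
  · rw [Real.exp_le_exp]
    have hne : ∃ n₀ : ℤ, ω n₀ ≠ ω' n₀ := by
      by_contra h'
      push_neg at h'
      exact h (funext h')
    obtain ⟨n₀, hn₀⟩ := hne
    have hbdd : BddAbove {N : ℕ | ∀ n : ℤ, |n| < (N : ℤ) → ω n = ω' n} := by
      refine ⟨n₀.natAbs, fun N hN => ?_⟩
      by_contra hlt
      push_neg at hlt
      refine hn₀ (hN n₀ ?_)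
      rw [Int.abs_eq_natAbs]
      exact_mod_cast hlt
    have hmem : (m + 1 : ℕ) ∈ {N : ℕ | ∀ n : ℤ, |n| < (N : ℤ) → ω n = ω' n} := by
      intro n hn
      refine hagree n (by omega)
    have hle : (m + 1 : ℕ) ≤ sSup {N : ℕ | ∀ n : ℤ, |n| < (N : ℤ) → ω n = ω' n} :=
      le_csSup hbdd hmem
    have : ((m : ℝ) + 1) ≤ (sSup {N : ℕ | ∀ n : ℤ, |n| < (N : ℤ) → ω n = ω' n} : ℕ) := by
      exact_mod_cast hle
    linarith

lemma shift_iterate_apply {A : Type*} (k : ℕ) (ω : ℤ → A) (n : ℤ) :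
    (shift^[k] ω) n = ω (n + k) := by
  induction k generalizing ω n with
  | zero => simp
  | succ k ih =>
    rw [Function.iterate_succ_apply, ih]
    show ω (n + k + 1) = ω (n + (k + 1 : ℕ))
    congr 1
    push_cast
    ring

lemma tendstoInMeasure_birkhoffAverage {α : Type*} [MeasurableSpace α] {μ : Measure α}
    [IsProbabilityMeasure μ] {T : α → α} (herg : Ergodic T μ) {g : α → ℝ}
    (hgmeas : Measurable g) {B : ℝ} (hB : ∀ x, |g x| ≤ B) :
    TendstoInMeasure μ (fun L => birkhoffAverage ℝ T g L) atTop (fun _ => ∫ x, g x ∂μ) := by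
  haveI : Fact ((1 : ℝ≥0∞) ≤ 2) := ⟨by norm_num⟩
  have hpres : MeasurePreserving T μ μ := herg.toMeasurePreserving
  have hmem : MemLp g 2 μ :=
    MemLp.of_bound hgmeas.aestronglyMeasurable B (Filter.Eventually.of_forall fun x => by
      simpa [Real.norm_eq_abs] using hB x)
  set G : Lp ℝ 2 μ := hmem.toLp g with hG
  set κ : Lp ℝ 2 μ →L[ℝ] Lp ℝ 2 μ :=
    (Lp.compMeasurePreservingₗᵢ ℝ T hpres (E := ℝ) (p := 2)).toContinuousLinearMap with hκ
  have hκnorm : ‖κ‖ ≤ 1 := LinearIsometry.norm_toContinuousLinearMap_le _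
  have hκcoe : ∀ y : Lp ℝ 2 μ, (κ y : α → ℝ) =ᵐ[μ] (y : α → ℝ) ∘ T := fun y =>
    Lp.coeFn_compMeasurePreserving y hpres
  -- iterates
  have hiter : ∀ k, ((κ^[k] G : Lp ℝ 2 μ) : α → ℝ) =ᵐ[μ] fun x => g (T^[k] x) := by
    intro k
    induction k with
    | zero => simpa using hmem.coeFn_toLp
    | succ k ih =>
      rw [Function.iterate_succ_apply']
      refine (hκcoe _).trans ?_
      have := hpres.quasiMeasurePreserving.ae_eq_comp (f := T) ih
      refine this.trans ?_
      filter_upwards with x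
      simp [Function.comp, Function.iterate_succ_apply]
  -- Birkhoff sums in Lp vs pointwise
  have hsum : ∀ L, ((birkhoffSum κ id L G : Lp ℝ 2 μ) : α → ℝ) =ᵐ[μ]
      fun x => birkhoffSum T g L x := by
    intro L
    induction L with
    | zero =>
      simpa [birkhoffSum, Pi.zero_def] using Lp.coeFn_zero (E := ℝ) (p := 2) (μ := μ)
    | succ L ih =>
      have h1 : birkhoffSum κ id (L + 1) G = birkhoffSum κ id L G + κ^[L] G :=
        birkhoffSum_succ κ id L G
      rw [h1]
      refine (Lp.coeFn_add _ _).trans ?_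
      filter_upwards [ih, hiter L] with x h1 h2
      simp only [Pi.add_apply, h1, h2, birkhoffSum_succ]
  have havg : ∀ L, ((birkhoffAverage ℝ κ id L G : Lp ℝ 2 μ) : α → ℝ) =ᵐ[μ]
      fun x => birkhoffAverage ℝ T g L x := by
    intro L
    have : birkhoffAverage ℝ κ id L G = (L : ℝ)⁻¹ • birkhoffSum κ id L G := rfl
    rw [this]
    refine (Lp.coeFn_smul _ _).trans ?_
    filter_upwards [hsum L] with x hx
    simp [birkhoffAverage, hx]
  -- limit
  set K := κ.eqLocus (1 : Lp ℝ 2 μ →L[ℝ] Lp ℝ 2 μ) with hK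
  have hconv : Tendsto (birkhoffAverage ℝ κ id · G) atTop
      (𝓝 (K.orthogonalProjectionOnto G : Lp ℝ 2 μ)) :=
    κ.tendsto_birkhoffAverage_orthogonalProjection hκnorm G
  set P : Lp ℝ 2 μ := (K.orthogonalProjectionOnto G : Lp ℝ 2 μ) with hP
  -- P is a.e. invariant, hence constant
  have hPmem : P ∈ K := hP ▸ SetLike.coe_mem _
  have hPfix : κ P = P := by
    have := (LinearMap.mem_eqLocus).1 hPmem
    simpa using this
  have hPinv : (P : α → ℝ) ∘ T =ᵐ[μ] (P : α → ℝ) := by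
    have := hκcoe P
    rw [hPfix] at this
    exact this.symm
  obtain ⟨cst, hcst⟩ := herg.ae_eq_const_of_ae_eq_comp₀
    (Lp.aestronglyMeasurable P).aemeasurable.nullMeasurable hPinv
  -- identify cst with the integral of g
  have hone_mem : MemLp (fun _ : α => (1 : ℝ)) 2 μ := memLp_const 1
  set one : Lp ℝ 2 μ := hone_mem.toLp _ with hone
  have honecoe : (one : α → ℝ) =ᵐ[μ] fun _ => (1 : ℝ) := hone_mem.coeFn_toLp
  have honeK : one ∈ K := by
    rw [LinearMap.mem_eqLocus]
    have h1 : (κ one : α → ℝ) =ᵐ[μ] (one : α → ℝ) := by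
      refine (hκcoe one).trans ?_
      refine (hpres.quasiMeasurePreserving.ae_eq_comp (f := T) honecoe).trans ?_
      exact (honecoe.symm).mono fun x hx => hx ▸ rfl
    simpa using Lp.ext h1
  have hinner : (inner ℝ (G - P) one : ℝ) = 0 :=
    K.starProjection_inner_eq_zero G one honeK
  have hGint : Integrable (G : α → ℝ) μ := (Lp.memLp G).integrable one_le_two
  have hPint : Integrable (P : α → ℝ) μ := (Lp.memLp P).integrable one_le_two
  have hint0 : ∫ x, ((G : α → ℝ) x - (P : α → ℝ) x) ∂μ = 0 := by
    rw [← hinner, L2.inner_def]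
    refine integral_congr_ae ?_
    filter_upwards [Lp.coeFn_sub G P, honecoe] with x hx h1
    simp only [RCLike.inner_apply, starRingEnd_apply, star_trivial, hx, Pi.sub_apply, h1, mul_one, one_mul]
  have hGxg : ∫ x, (G : α → ℝ) x ∂μ = ∫ x, g x ∂μ :=
    integral_congr_ae hmem.coeFn_toLp
  have hPc : ∫ x, (P : α → ℝ) x ∂μ = cst := by
    rw [integral_congr_ae hcst]
    simp
  have hcstval : cst = ∫ x, g x ∂μ := by
    rw [integral_sub hGint hPint] at hint0
    rw [← hPc, ← hGxg]
    linarith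
  have hPconst : (P : α → ℝ) =ᵐ[μ] fun _ => ∫ x, g x ∂μ := by
    rw [← hcstval]
    exact hcst
  have hTIM : TendstoInMeasure μ
      (fun L => ((birkhoffAverage ℝ κ id L G : Lp ℝ 2 μ) : α → ℝ)) atTop (P : α → ℝ) :=
    tendstoInMeasure_of_tendsto_Lp hconv
  exact hTIM.congr havg hPconst

end LDE

/-- large deviations.  For a topologically mixing subshift of finite type
`Ω`, a `T`-ergodic probability measure `μ` with the bounded distortion property, and an
`α`-Hölder `f`, Birkhoff averages deviate from `∫ f dμ` by `ε` with exponentially small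
probability. -/
theorem large_deviation_estimate
    {A : Type*} [Fintype A] [TopologicalSpace A] [DiscreteTopology A]
    [MeasurableSpace A] [MeasurableSingletonClass A]
    (Ω : Set (ℤ → A)) (hclosed : IsClosed Ω) (hΩinv : ∀ ω, ω ∈ Ω ↔ shift ω ∈ Ω)
    (hmix : ∀ U V : Set (ℤ → A), IsOpen U → IsOpen V →
      (U ∩ Ω).Nonempty → (V ∩ Ω).Nonempty →
      ∃ N : ℕ, ∀ n ≥ N, ((shift^[n] '' (U ∩ Ω)) ∩ (V ∩ Ω)).Nonempty)
    (μ : Measure (ℤ → A)) [IsProbabilityMeasure μ]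
    (hsupp : μ Ω = 1)
    (herg : Ergodic (shift (A := A)) μ)
    (C₀ : ℝ≥0) (hC₀ : 1 ≤ C₀)
    (hbd : ∀ (n l : ℤ) (u v : List A), u ≠ [] → v ≠ [] →
      n + (u.length : ℤ) - 1 < l →
      (cylinder n u ∩ cylinder l v ∩ Ω).Nonempty →
      μ (cylinder n u) * μ (cylinder l v) ≤ C₀ * μ (cylinder n u ∩ cylinder l v) ∧
      μ (cylinder n u ∩ cylinder l v) ≤ C₀ * (μ (cylinder n u) * μ (cylinder l v)))
    (f : (ℤ → A) → ℝ) (hfmeas : Measurable f)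
    (α Cf : ℝ) (hα : 0 < α) (hα1 : α ≤ 1) (hCf : 0 < Cf)
    (hf : ∀ ω ∈ Ω, ∀ ω' ∈ Ω, |f ω - f ω'| ≤ Cf * shiftDist ω ω' ^ α) :
    ∀ ε > 0, ∃ C > 0, ∃ c > 0, ∀ n : ℕ, 1 ≤ n →
      μ {ω | ω ∈ Ω ∧
          ε ≤ |(n : ℝ)⁻¹ * (∑ k ∈ Finset.range n, f (shift^[k] ω)) - ∫ x, f x ∂μ|}
        < ENNReal.ofReal (C * Real.exp (-c * n)) := by
  classical
  have hΩmeas : MeasurableSet Ω := hclosed.measurableSet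
  have hpres : MeasurePreserving (shift (A := A)) μ μ := herg.toMeasurePreserving
  have hΩne : Ω.Nonempty := by
    rw [Set.nonempty_iff_ne_empty]
    rintro rfl
    simp at hsupp
  obtain ⟨ω₀, hω₀⟩ := hΩne
  haveI : Nonempty A := ⟨ω₀ 0⟩
  have hΩcne : μ Ωᶜ = 0 := by
    have h := measure_compl hΩmeas (measure_ne_top μ Ω)
    rw [hsupp, measure_univ] at h
    simpa using h
  have haeΩ : ∀ᵐ ω ∂μ, ω ∈ Ω := by
    rw [ae_iff]
    simpa [Set.compl_def] using hΩcne
  have hΩit : ∀ (k : ℕ) (ω : ℤ → A), ω ∈ Ω → shift^[k] ω ∈ Ω := by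
    intro k
    induction k with
    | zero => simpa using fun ω h => h
    | succ k ih =>
      intro ω hω
      rw [Function.iterate_succ_apply]
      exact ih _ ((hΩinv ω).1 hω)
  -- the separated-cylinder estimate
  have hcyleq : ∀ (n : ℤ) (N : ℕ) (w : Fin N → A), LDE.cyl n w = cylinder n (List.ofFn w) := by
    intro n N w
    ext ω
    constructor
    · intro h i
      have h2 := h (Fin.cast (List.length_ofFn (f := w)) i)
      simpa [List.get_ofFn, Fin.cast] using h2
    · intro h i
      have h2 := h (Fin.cast (List.length_ofFn (f := w)).symm i)
      simpa [List.get_ofFn] using h2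
  have hsep : LDE.Sep μ C₀ := by
    intro n l N M w v hnl
    have hone : (1 : ℝ≥0∞) ≤ (C₀ : ℝ≥0∞) := by exact_mod_cast hC₀
    rcases Nat.eq_zero_or_pos N with rfl | hN
    · have huniv : LDE.cyl n w = Set.univ := by
        ext ω; simp [LDE.cyl]
      rw [huniv, Set.univ_inter, measure_univ, one_mul]
      exact le_mul_of_one_le_left zero_le hone
    rcases Nat.eq_zero_or_pos M with rfl | hM
    · have huniv : LDE.cyl l v = Set.univ := by
        ext ω; simp [LDE.cyl]
      rw [huniv, Set.inter_univ, measure_univ, mul_one]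
      exact le_mul_of_one_le_left zero_le hone
    rw [hcyleq, hcyleq]
    have hu : List.ofFn w ≠ [] := by
      simp only [ne_eq, List.ofFn_eq_nil_iff]
      omega
    have hv : List.ofFn v ≠ [] := by
      simp only [ne_eq, List.ofFn_eq_nil_iff]
      omega
    have hlen : n + ((List.ofFn w).length : ℤ) - 1 < l := by
      rw [List.length_ofFn]
      omega
    by_cases hne : (cylinder n (List.ofFn w) ∩ cylinder l (List.ofFn v) ∩ Ω).Nonempty
    · exact (hbd n l _ _ hu hv hlen hne).2
    · have hz : μ (cylinder n (List.ofFn w) ∩ cylinder l (List.ofFn v)) = 0 := by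
        refine measure_mono_null ?_ hΩcne
        intro x hx
        by_contra hxx
        exact hne ⟨x, hx, not_not.mp hxx⟩
      rw [hz]
      exact zero_le
  intro ε hε
  -- choose m
  set m : ℕ := ⌈Real.log (8 * Cf / ε) / α⌉₊ with hm_def
  have hη : Cf * Real.exp (-(α * ((m : ℝ) + 1))) ≤ ε / 8 := by
    have h1 : Real.log (8 * Cf / ε) / α ≤ (m : ℝ) := Nat.le_ceil _
    have h2 : Real.log (8 * Cf / ε) ≤ α * ((m : ℝ) + 1) := by
      have := (div_le_iff₀ hα).1 h1
      nlinarith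
    have h3 : Real.exp (-(α * ((m : ℝ) + 1))) ≤ Real.exp (-(Real.log (8 * Cf / ε))) :=
      Real.exp_le_exp.2 (by linarith)
    have h4 : Real.exp (-(Real.log (8 * Cf / ε))) = ε / (8 * Cf) := by
      rw [Real.exp_neg, Real.exp_log (by positivity)]
      rw [inv_div]
    calc Cf * Real.exp (-(α * ((m : ℝ) + 1))) ≤ Cf * (ε / (8 * Cf)) := by
          rw [← h4]; exact mul_le_mul_of_nonneg_left h3 hCf.le
      _ = ε / 8 := by field_simp
  -- the finite-window approximation g
  set W := (Fin (2 * m + 1) → A) with hW_def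
  haveI : Nonempty W := ⟨fun _ => ω₀ 0⟩
  set restr : (ℤ → A) → W := fun ω i => ω (-(m : ℤ) + (i : ℕ)) with hrestr_def
  set Rep : W → (ℤ → A) := fun w =>
    if h : ∃ ω ∈ Ω, restr ω = w then h.choose else ω₀ with hRep_def
  have hRepΩ : ∀ w, Rep w ∈ Ω := by
    intro w
    by_cases h : ∃ ω ∈ Ω, restr ω = w
    · have heq : Rep w = h.choose := by rw [hRep_def]; exact dif_pos h
      rw [heq]; exact h.choose_spec.1
    · have heq : Rep w = ω₀ := by rw [hRep_def]; exact dif_neg h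
      rw [heq]; exact hω₀
  have hRepAgree : ∀ ω ∈ Ω, restr (Rep (restr ω)) = restr ω := by
    intro ω hω
    have h : ∃ ω' ∈ Ω, restr ω' = restr ω := ⟨ω, hω, rfl⟩
    have heq : Rep (restr ω) = h.choose := by rw [hRep_def]; exact dif_pos h
    rw [heq]
    exact h.choose_spec.2
  set g : (ℤ → A) → ℝ := fun ω => f (Rep (restr ω)) with hg_def
  set B : ℝ := 1 + Finset.univ.sup' Finset.univ_nonempty (fun w : W => |f (Rep w)|) with hB_def
  have hgB : ∀ ω, |g ω| ≤ B := by
    intro ω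
    have h1 : |f (Rep (restr ω))| ≤ Finset.univ.sup' Finset.univ_nonempty (fun w : W => |f (Rep w)|) :=
      Finset.le_sup' (fun w : W => |f (Rep w)|) (Finset.mem_univ (restr ω))
    rw [hB_def, hg_def]
    linarith
  have hBpos : 0 < B := by
    have h1 : |f (Rep (restr ω₀))| ≤
        Finset.univ.sup' Finset.univ_nonempty (fun w : W => |f (Rep w)|) :=
      Finset.le_sup' (fun w : W => |f (Rep w)|) (Finset.mem_univ (restr ω₀))
    have h2 : 0 ≤ |f (Rep (restr ω₀))| := abs_nonneg _
    rw [hB_def]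
    linarith
  clear_value B
  have hgmeas : Measurable g := by
    have h1 : Measurable restr := measurable_pi_lambda _ fun i => measurable_pi_apply _
    exact (measurable_of_countable (fun w : W => f (Rep w))).comp h1
  have hgdet : ∀ ω ω' : ℤ → A, (∀ i : ℤ, -(m : ℤ) ≤ i → i ≤ (m : ℤ) → ω i = ω' i) →
      g ω = g ω' := by
    intro ω ω' hag
    have : restr ω = restr ω' := by
      funext i
      refine hag _ (by omega) ?_
      have : (i : ℕ) < 2 * m + 1 := i.isLt
      omega
    rw [hg_def]
    simp only [this]
  have happrox : ∀ ω ∈ Ω, |f ω - g ω| ≤ ε / 8 := by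
    intro ω hω
    set ω' := Rep (restr ω) with hω'_def
    have hω'Ω : ω' ∈ Ω := hRepΩ _
    have hagree : ∀ n : ℤ, |n| ≤ (m : ℤ) → ω n = ω' n := by
      intro n hn
      have hn' := abs_le.1 hn
      have h1 : restr ω' = restr ω := hRepAgree ω hω
      have h2 : (n + m).toNat < 2 * m + 1 := by omega
      have h3 := congrFun h1 ⟨(n + m).toNat, h2⟩
      simp only [hrestr_def] at h3
      have h4 : -(m : ℤ) + (((⟨(n + m).toNat, h2⟩ : Fin (2 * m + 1)) : ℕ) : ℤ) = n := by
        simp only [Fin.val_mk]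
        omega
      rw [h4] at h3
      exact h3.symm
    have hsd : shiftDist ω ω' ≤ Real.exp (-((m : ℝ) + 1)) := LDE.shiftDist_le ω ω' m hagree
    have hsd0 : 0 ≤ shiftDist ω ω' := LDE.shiftDist_nonneg ω ω'
    have hrp : shiftDist ω ω' ^ α ≤ Real.exp (-((m : ℝ) + 1)) ^ α :=
      Real.rpow_le_rpow hsd0 hsd hα.le
    have hexp : Real.exp (-((m : ℝ) + 1)) ^ α = Real.exp (-(α * ((m : ℝ) + 1))) := by
      rw [Real.rpow_def_of_pos (Real.exp_pos _), Real.log_exp]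
      ring_nf
    have h5 := hf ω hω ω' hω'Ω
    have : |f ω - f ω'| ≤ Cf * Real.exp (-(α * ((m : ℝ) + 1))) := by
      calc |f ω - f ω'| ≤ Cf * shiftDist ω ω' ^ α := h5
        _ ≤ Cf * Real.exp (-(α * ((m : ℝ) + 1))) := by
            rw [← hexp]
            exact mul_le_mul_of_nonneg_left hrp hCf.le
    have : |f ω - f ω'| ≤ ε / 8 := this.trans hη
    simpa [hg_def, hω'_def] using this
  -- integrals
  have hgint : Integrable g μ := by
    refine Integrable.mono' (integrable_const B) hgmeas.aestronglyMeasurable ?_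
    exact Filter.Eventually.of_forall fun ω => by simpa [Real.norm_eq_abs] using hgB ω
  have hfint : Integrable f μ := by
    refine Integrable.mono' (integrable_const (B + ε / 8)) hfmeas.aestronglyMeasurable ?_
    filter_upwards [haeΩ] with ω hω
    have h1 := happrox ω hω
    have h2 := hgB ω
    rw [Real.norm_eq_abs]
    have := abs_sub_abs_le_abs_sub (f ω) (g ω)
    linarith [abs_sub_comm (f ω) (g ω)]
  set I : ℝ := ∫ x, g x ∂μ with hI_def
  have hIB : |I| ≤ B := by
    have h := norm_integral_le_of_norm_le_const
      (μ := μ) (f := g) (C := B)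
      (Filter.Eventually.of_forall fun ω => by simpa [Real.norm_eq_abs] using hgB ω)
    simpa [Real.norm_eq_abs, measure_univ] using h
  have hIdiff : |(∫ x, f x ∂μ) - I| ≤ ε / 8 := by
    have h0 : (∫ x, f x ∂μ) - I = ∫ x, (f x - g x) ∂μ := (integral_sub hfint hgint).symm
    rw [h0]
    have h := norm_integral_le_of_norm_le_const (μ := μ) (f := fun x => f x - g x) (C := ε / 8)
      (by filter_upwards [haeΩ] with ω hω; simpa [Real.norm_eq_abs] using happrox ω hω)
    simpa [Real.norm_eq_abs, measure_univ] using h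
  -- reduce the event from f to g
  have hEsub : ∀ n : ℕ, 1 ≤ n → ∀ ω ∈ Ω,
      ε ≤ |(n : ℝ)⁻¹ * (∑ k ∈ Finset.range n, f (shift^[k] ω)) - ∫ x, f x ∂μ| →
      ε / 2 ≤ |(n : ℝ)⁻¹ * (∑ k ∈ Finset.range n, g (shift^[k] ω)) - I| := by
    intro n hn ω hω hev
    have hnpos : (0 : ℝ) < n := by exact_mod_cast hn
    have hdiffsum : |(∑ k ∈ Finset.range n, f (shift^[k] ω)) -
        (∑ k ∈ Finset.range n, g (shift^[k] ω))| ≤ n * (ε / 8) := by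
      rw [← Finset.sum_sub_distrib]
      calc |∑ k ∈ Finset.range n, (f (shift^[k] ω) - g (shift^[k] ω))|
          ≤ ∑ k ∈ Finset.range n, |f (shift^[k] ω) - g (shift^[k] ω)| :=
            Finset.abs_sum_le_sum_abs _ _
        _ ≤ ∑ _k ∈ Finset.range n, (ε / 8) :=
            Finset.sum_le_sum fun k _ => happrox _ (hΩit k ω hω)
        _ = n * (ε / 8) := by simp [mul_comm]
    have h1 : |(n : ℝ)⁻¹ * (∑ k ∈ Finset.range n, f (shift^[k] ω)) -
        (n : ℝ)⁻¹ * (∑ k ∈ Finset.range n, g (shift^[k] ω))| ≤ ε / 8 := by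
      rw [← mul_sub, abs_mul, abs_inv, abs_of_pos hnpos]
      rw [inv_mul_le_iff₀ hnpos]
      exact hdiffsum
    have h2 := abs_sub_abs_le_abs_sub
      ((n : ℝ)⁻¹ * (∑ k ∈ Finset.range n, f (shift^[k] ω)) - ∫ x, f x ∂μ)
      ((n : ℝ)⁻¹ * (∑ k ∈ Finset.range n, g (shift^[k] ω)) - I)
    have h3 : |((n : ℝ)⁻¹ * (∑ k ∈ Finset.range n, f (shift^[k] ω)) - ∫ x, f x ∂μ) -
        ((n : ℝ)⁻¹ * (∑ k ∈ Finset.range n, g (shift^[k] ω)) - I)| ≤ ε / 4 := by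
      have h4 : ((n : ℝ)⁻¹ * (∑ k ∈ Finset.range n, f (shift^[k] ω)) - ∫ x, f x ∂μ) -
          ((n : ℝ)⁻¹ * (∑ k ∈ Finset.range n, g (shift^[k] ω)) - I) =
          ((n : ℝ)⁻¹ * (∑ k ∈ Finset.range n, f (shift^[k] ω)) -
            (n : ℝ)⁻¹ * (∑ k ∈ Finset.range n, g (shift^[k] ω))) - ((∫ x, f x ∂μ) - I) := by
        ring
      rw [h4]
      calc _ ≤ _ := abs_sub _ _
        _ ≤ ε / 8 + ε / 8 := add_le_add h1 hIdiff
        _ = ε / 4 := by ring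
    linarith
  -- parameters
  set ε₁ : ℝ := ε / 16 with hε₁_def
  have hε₁pos : 0 < ε₁ := by positivity
  set θ : ℝ := ε / (16 * B) with hθ_def
  have hθpos : 0 < θ := by positivity
  set D : ℝ := Real.exp (-((2 + Real.log 2) / θ)) with hD_def
  have hDpos : 0 < D := Real.exp_pos _
  have hC₀Rpos : (0 : ℝ) < (C₀ : ℝ) := by
    have : (1 : ℝ) ≤ (C₀ : ℝ) := by exact_mod_cast hC₀
    linarith
  -- choose L via the ergodic theorem
  have hTIM := LDE.tendstoInMeasure_birkhoffAverage herg hgmeas hgB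
  have htail := (tendstoInMeasure_iff_dist.1 hTIM) ε₁ hε₁pos
  have hev : ∀ᶠ L in atTop,
      μ {x | ε₁ ≤ dist (birkhoffAverage ℝ shift g L x) I} < ENNReal.ofReal (D / (C₀ : ℝ)) := by
    refine htail.eventually_lt_const ?_
    rw [ENNReal.ofReal_pos]
    positivity
  obtain ⟨L, hLbig, hLδ⟩ := ((eventually_ge_atTop (2 * m + 2)).and hev).exists
  have hL1 : 1 ≤ L := by omega
  have hLpos : (0 : ℝ) < L := by exact_mod_cast hL1
  -- bad blocks
  set Bad : ℕ → Set (ℤ → A) := fun i =>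
    {ω | ε₁ ≤ dist (birkhoffAverage ℝ shift g L (shift^[i * L] ω)) I} with hBad_def
  have hBadPre : ∀ i, Bad i = shift^[i * L] ⁻¹'
      {x | ε₁ ≤ dist (birkhoffAverage ℝ shift g L x) I} := fun i => rfl
  have hBirkMeas : Measurable fun x => birkhoffAverage ℝ shift g L x := by
    unfold birkhoffAverage birkhoffSum
    simp only [smul_eq_mul]
    exact Measurable.const_mul
      (Finset.measurable_sum _ fun k _ => hgmeas.comp (hpres.measurable.iterate k)) _
  have hBad0meas : MeasurableSet {x | ε₁ ≤ dist (birkhoffAverage ℝ shift g L x) I} := by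
    have h1 : Measurable fun x => dist (birkhoffAverage ℝ shift g L x) I :=
      (continuous_dist.comp (Continuous.prodMk continuous_id continuous_const)).measurable.comp
        hBirkMeas
    exact measurableSet_le measurable_const h1
  have hBadmeas : ∀ i, MeasurableSet (Bad i) := by
    intro i
    rw [hBadPre]
    exact (hpres.measurable.iterate (i * L)) hBad0meas
  set δ : ℝ≥0∞ := μ {x | ε₁ ≤ dist (birkhoffAverage ℝ shift g L x) I} with hδ_def
  have hBadμ : ∀ i, μ (Bad i) = δ := by
    intro i
    rw [hBadPre]
    exact (hpres.iterate (i * L)).measure_preimage hBad0meas.nullMeasurableSet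
  -- determinedness of bad blocks
  have hBadDet : ∀ i : ℕ,
      LDE.Det ((i * L : ℕ) - (m : ℤ)) ((i * L : ℕ) + L - 1 + (m : ℤ)) (Bad i) := by
    intro i ω ω' hag
    have hkey : birkhoffAverage ℝ shift g L (shift^[i * L] ω) =
        birkhoffAverage ℝ shift g L (shift^[i * L] ω') := by
      unfold birkhoffAverage birkhoffSum
      congr 1
      refine Finset.sum_congr rfl fun k hk => ?_
      have hkL : k < L := Finset.mem_range.1 hk
      have h1 : ∀ (x : ℤ → A), shift^[k] (shift^[i * L] x) = shift^[k + i * L] x := by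
        intro x
        rw [Function.iterate_add_apply]
      rw [h1, h1]
      refine hgdet _ _ fun p hp1 hp2 => ?_
      rw [LDE.shift_iterate_apply, LDE.shift_iterate_apply]
      refine hag _ ?_ ?_
      · push_cast
        omega
      · push_cast
        omega
    simp only [hBad_def, Set.mem_setOf_eq, hkey]
  -- the union bound over bad configurations
  set n₀ : ℕ := max L (⌈16 * L * B / ε⌉₊) + 1 with hn₀_def
  set c : ℝ := 1 / L with hc_def
  have hcpos : 0 < c := by positivity
  set C : ℝ := (2 * Real.exp 2 + 1) * Real.exp (c * n₀) with hC_def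
  have hCpos : 0 < C := by positivity
  refine ⟨C, hCpos, c, hcpos, ?_⟩
  intro n hn
  set E : Set (ℤ → A) := {ω | ω ∈ Ω ∧
      ε ≤ |(n : ℝ)⁻¹ * (∑ k ∈ Finset.range n, f (shift^[k] ω)) - ∫ x, f x ∂μ|} with hE_def
  by_cases hnsmall : n < n₀
  · -- small n : trivial bound
    have h1 : μ E ≤ 1 := prob_le_one
    have h2 : (1 : ℝ) < C * Real.exp (-c * n) := by
      have h3 : Real.exp (c * n₀) * Real.exp (-c * n) = Real.exp (c * ((n₀ : ℝ) - n)) := by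
        rw [← Real.exp_add]
        congr 1
        ring
      have h4 : (1 : ℝ) ≤ Real.exp (c * ((n₀ : ℝ) - n)) := by
        calc (1 : ℝ) = Real.exp 0 := Real.exp_zero.symm
          _ ≤ Real.exp (c * ((n₀ : ℝ) - n)) := by
              apply Real.exp_le_exp.2
              have : (n : ℝ) ≤ (n₀ : ℝ) := by exact_mod_cast hnsmall.le
              nlinarith
      have h5 : (0 : ℝ) < Real.exp 2 := Real.exp_pos 2
      calc (1 : ℝ) ≤ Real.exp (c * ((n₀ : ℝ) - n)) := h4
        _ = Real.exp (c * n₀) * Real.exp (-c * n) := by rw [h3]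
        _ < (2 * Real.exp 2 + 1) * (Real.exp (c * n₀) * Real.exp (-c * n)) := by
            nlinarith [Real.exp_pos (c * (n₀ : ℝ)), Real.exp_pos (-c * (n : ℝ)),
              mul_pos (Real.exp_pos (c * (n₀ : ℝ))) (Real.exp_pos (-c * (n : ℝ)))]
        _ = C * Real.exp (-c * n) := by rw [hC_def]; ring
    calc μ E ≤ 1 := h1
      _ = ENNReal.ofReal 1 := ENNReal.ofReal_one.symm
      _ < ENNReal.ofReal (C * Real.exp (-c * n)) := by
          rw [ENNReal.ofReal_lt_ofReal_iff (by positivity)]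
          exact h2
  · -- large n
    push_neg at hnsmall
    have hnn₀ : n₀ ≤ n := hnsmall
    have hnL : L ≤ n := by omega
    have hn16 : 16 * L * B / ε ≤ (n : ℝ) := by
      have h1 : (⌈16 * L * B / ε⌉₊ : ℝ) ≤ n := by
        have : ⌈16 * L * B / ε⌉₊ ≤ n := by omega
        exact_mod_cast this
      exact (Nat.le_ceil _).trans h1
    have h2LB : 2 * (L : ℝ) * B ≤ (n : ℝ) * ε / 8 := by
      rw [div_le_iff₀ hε] at hn16
      nlinarith
    set q : ℕ := n / L with hq_def
    have hqL : q * L ≤ n := Nat.div_mul_le_self n L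
    have hmod : n % L < L := Nat.mod_lt _ (by omega)
    have hndm : L * q + n % L = n := Nat.div_add_mod n L
    have hqLcomm : q * L = L * q := Nat.mul_comm q L
    set k : ℕ := ⌈θ * q⌉₊ with hk_def
    have hkθ : θ * q ≤ (k : ℝ) := Nat.le_ceil _
    set P : ℕ → Finset (Finset ℕ) := fun r =>
      ((Finset.range q).filter (fun i => i % 2 = r)).powersetCard k with hP_def
    -- inclusion of the event in the union of bad configurations
    have hEcup : E ⊆ ⋃ r ∈ Finset.range 2, ⋃ t ∈ P r, ⋂ i ∈ t, Bad i := by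
      intro ω hωE
      obtain ⟨hωΩ, hωev⟩ := hωE
      have hg2 : ε / 2 ≤ |(n : ℝ)⁻¹ * (∑ j ∈ Finset.range n, g (shift^[j] ω)) - I| :=
        hEsub n hn ω hωΩ hωev
      set T : ℕ → ℝ := fun i => ∑ j ∈ Finset.range L, g (shift^[i * L + j] ω) with hT_def
      set s : Finset ℕ := (Finset.range q).filter (fun i => ω ∈ Bad i) with hs_def
      -- per-block bounds
      have hTbound : ∀ i, |T i - L * I| ≤ 2 * L * B := by
        intro i
        have h1 : |T i| ≤ L * B := by
          calc |T i| ≤ ∑ j ∈ Finset.range L, |g (shift^[i * L + j] ω)| :=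
                Finset.abs_sum_le_sum_abs _ _
            _ ≤ ∑ _j ∈ Finset.range L, B := Finset.sum_le_sum fun j _ => hgB _
            _ = L * B := by simp [mul_comm]
        have h2 : |(L : ℝ) * I| ≤ L * B := by
          rw [abs_mul, abs_of_nonneg (by positivity : (0:ℝ) ≤ (L:ℝ))]
          exact mul_le_mul_of_nonneg_left hIB (by positivity)
        calc |T i - L * I| ≤ |T i| + |(L : ℝ) * I| := abs_sub _ _
          _ ≤ L * B + L * B := add_le_add h1 h2
          _ = 2 * L * B := by ring
      have hTgood : ∀ i, ω ∉ Bad i → |T i - L * I| ≤ L * ε₁ := by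
        intro i hi
        have h1 : dist (birkhoffAverage ℝ shift g L (shift^[i * L] ω)) I < ε₁ := by
          by_contra h
          push_neg at h
          exact hi h
        have h2 : birkhoffAverage ℝ shift g L (shift^[i * L] ω) = (L : ℝ)⁻¹ * T i := by
          unfold birkhoffAverage birkhoffSum
          rw [smul_eq_mul]
          congr 1
          refine Finset.sum_congr rfl fun j hj => ?_
          rw [← Function.iterate_add_apply, Nat.add_comm j (i * L)]
        rw [h2, Real.dist_eq] at h1
        have h3 : (L : ℝ)⁻¹ * T i - I = (L : ℝ)⁻¹ * (T i - L * I) := by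
          field_simp
        rw [h3, abs_mul, abs_inv, abs_of_pos hLpos] at h1
        rw [inv_mul_lt_iff₀ hLpos] at h1
        linarith
      -- sum decomposition
      have hS : (∑ j ∈ Finset.range n, g (shift^[j] ω)) =
          (∑ i ∈ Finset.range q, T i) + ∑ j ∈ Finset.Ico (q * L) n, g (shift^[j] ω) := by
        rw [Finset.range_eq_Ico,
          ← Finset.sum_Ico_consecutive _ (Nat.zero_le (q * L)) hqL,
          ← Finset.range_eq_Ico, LDE.sum_range_mul]
      have hR : |∑ j ∈ Finset.Ico (q * L) n, g (shift^[j] ω)| ≤ L * B := by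
        calc |∑ j ∈ Finset.Ico (q * L) n, g (shift^[j] ω)|
            ≤ ∑ j ∈ Finset.Ico (q * L) n, |g (shift^[j] ω)| := Finset.abs_sum_le_sum_abs _ _
          _ ≤ ∑ _j ∈ Finset.Ico (q * L) n, B := Finset.sum_le_sum fun j _ => hgB _
          _ = (n - q * L : ℕ) * B := by
              rw [Finset.sum_const, Nat.card_Ico, nsmul_eq_mul]
          _ ≤ L * B := by
              have h1 : ((n - q * L : ℕ) : ℝ) ≤ (L : ℝ) := by
                have : n - q * L ≤ L := by omega
                exact_mod_cast this
              exact mul_le_mul_of_nonneg_right h1 hBpos.le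
      have hnpos : (0 : ℝ) < n := by
        have : 1 ≤ n := hn
        exact_mod_cast this
      have h0 : (n : ℝ) * (ε / 2) ≤ |(∑ j ∈ Finset.range n, g (shift^[j] ω)) - n * I| := by
        have h1 : (n : ℝ)⁻¹ * (∑ j ∈ Finset.range n, g (shift^[j] ω)) - I =
            (n : ℝ)⁻¹ * ((∑ j ∈ Finset.range n, g (shift^[j] ω)) - n * I) := by
          field_simp
        rw [h1, abs_mul, abs_inv, abs_of_pos hnpos] at hg2
        rw [inv_mul_eq_div, le_div_iff₀ hnpos] at hg2
        linarith
      have hsubT : ∑ i ∈ Finset.range q, (T i - L * I) =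
          (∑ i ∈ Finset.range q, T i) - q * (L * I) := by
        rw [Finset.sum_sub_distrib, Finset.sum_const, Finset.card_range, nsmul_eq_mul]
      have hsum_ti : (n : ℝ) * (ε / 2) - 2 * L * B ≤ ∑ i ∈ Finset.range q, |T i - L * I| := by
        have hdec : (∑ j ∈ Finset.range n, g (shift^[j] ω)) - n * I =
            (∑ i ∈ Finset.range q, (T i - L * I)) +
            ((∑ j ∈ Finset.Ico (q * L) n, g (shift^[j] ω)) - ((n : ℝ) - q * L) * I) := by
          rw [hsubT, hS]
          push_cast
          ring
        have h2 : |(∑ j ∈ Finset.range n, g (shift^[j] ω)) - n * I| ≤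
            (∑ i ∈ Finset.range q, |T i - L * I|) + (L * B + L * B) := by
          rw [hdec]
          have h3 : |∑ i ∈ Finset.range q, (T i - L * I)| ≤
              ∑ i ∈ Finset.range q, |T i - L * I| := Finset.abs_sum_le_sum_abs _ _
          have h4 : |((n : ℝ) - q * L) * I| ≤ L * B := by
            have hqLr : ((q * L : ℕ) : ℝ) ≤ (n : ℝ) := by exact_mod_cast hqL
            have hnub : (n : ℝ) ≤ (q : ℝ) * L + L := by
              have h6 : n ≤ q * L + L := by omega
              have h7 : ((n : ℕ) : ℝ) ≤ ((q * L + L : ℕ) : ℝ) := by exact_mod_cast h6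
              push_cast at h7
              linarith
            have h5 : |(n : ℝ) - q * L| ≤ (L : ℝ) := by
              push_cast at hqLr
              rw [abs_of_nonneg (by linarith)]
              linarith
            rw [abs_mul]
            exact mul_le_mul h5 hIB (abs_nonneg _) (by positivity)
          calc _ ≤ _ := abs_add_le _ _
            _ ≤ _ := add_le_add h3 ((abs_sub _ _).trans (add_le_add hR h4))
        nlinarith [h0]
      -- counting bad blocks
      have hsplit_sum : ∑ i ∈ Finset.range q, |T i - L * I| ≤
          (s.card : ℝ) * (2 * L * B) + (q : ℝ) * (L * ε₁) := by
        rw [← Finset.sum_filter_add_sum_filter_not (Finset.range q) (fun i => ω ∈ Bad i)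
          (fun i => |T i - L * I|)]
        have hb1 : ∑ i ∈ s, |T i - L * I| ≤ (s.card : ℝ) * (2 * L * B) := by
          calc ∑ i ∈ s, |T i - L * I| ≤ ∑ _i ∈ s, (2 * L * B) :=
                Finset.sum_le_sum fun i _ => hTbound i
            _ = (s.card : ℝ) * (2 * L * B) := by rw [Finset.sum_const, nsmul_eq_mul]
        have hb2 : ∑ i ∈ (Finset.range q).filter (fun i => ¬ (ω ∈ Bad i)), |T i - L * I| ≤
            (q : ℝ) * (L * ε₁) := by
          calc ∑ i ∈ (Finset.range q).filter (fun i => ¬ (ω ∈ Bad i)), |T i - L * I|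
              ≤ ∑ _i ∈ (Finset.range q).filter (fun i => ¬ (ω ∈ Bad i)), (L * ε₁) :=
                Finset.sum_le_sum fun i hi => hTgood i (Finset.mem_filter.1 hi).2
            _ = (((Finset.range q).filter (fun i => ¬ (ω ∈ Bad i))).card : ℝ) * (L * ε₁) := by
                rw [Finset.sum_const, nsmul_eq_mul]
            _ ≤ (q : ℝ) * (L * ε₁) := by
                have h1 : ((Finset.range q).filter (fun i => ¬ (ω ∈ Bad i))).card ≤ q := by
                  calc _ ≤ (Finset.range q).card := Finset.card_filter_le _ _
                    _ = q := Finset.card_range q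
                have h2 : (((Finset.range q).filter (fun i => ¬ (ω ∈ Bad i))).card : ℝ) ≤ q := by
                  exact_mod_cast h1
                exact mul_le_mul_of_nonneg_right h2 (by positivity)
        exact add_le_add hb1 hb2
      have hqLr : ((q : ℝ) * L) ≤ (n : ℝ) := by
        have h7 : ((q * L : ℕ) : ℝ) ≤ ((n : ℕ) : ℝ) := by exact_mod_cast hqL
        push_cast at h7
        linarith
      have hcards : 2 * θ * (q : ℝ) ≤ (s.card : ℝ) := by
        have hkey1 : (n : ℝ) * ε / 4 ≤ (s.card : ℝ) * (2 * L * B) := by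
          have hqe : (q : ℝ) * (L * ε₁) ≤ (n : ℝ) * ε / 16 := by
            rw [hε₁_def]
            calc (q : ℝ) * (L * (ε / 16)) = ((q : ℝ) * L) * ε / 16 := by ring
              _ ≤ (n : ℝ) * ε / 16 := by
                  apply div_le_div_of_nonneg_right _ (by norm_num)
                  exact mul_le_mul_of_nonneg_right hqLr hε.le
          have hnε : 0 < (n : ℝ) * ε := mul_pos hnpos hε
          nlinarith [hsum_ti, hsplit_sum, h2LB, hqe, hnε]
        have hkey2 : 2 * θ * (q : ℝ) * (2 * L * B) ≤ (n : ℝ) * ε / 4 := by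
          rw [hθ_def]
          have hexpand : 2 * (ε / (16 * B)) * (q : ℝ) * (2 * L * B) = ((q : ℝ) * L) * ε / 4 := by
            field_simp
            ring
          rw [hexpand]
          apply div_le_div_of_nonneg_right _ (by norm_num)
          exact mul_le_mul_of_nonneg_right hqLr hε.le
        have h2LBpos : (0 : ℝ) < 2 * L * B := by positivity
        exact le_of_mul_le_mul_right (hkey2.trans hkey1) h2LBpos
      -- choose a parity class
      have hparsplit : (s.filter (fun i => i % 2 = 0)).card +
          (s.filter (fun i => ¬ (i % 2 = 0))).card = s.card :=
        Finset.card_filter_add_card_filter_not _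
      have hfilter1 : s.filter (fun i => ¬ (i % 2 = 0)) = s.filter (fun i => i % 2 = 1) := by
        apply Finset.filter_congr
        intro i _
        constructor <;> (intro h; omega)
      obtain ⟨r, hr2, hrcard⟩ : ∃ r, r < 2 ∧ θ * (q : ℝ) ≤ ((s.filter (fun i => i % 2 = r)).card : ℝ) := by
        by_cases hc01 : (s.filter (fun i => i % 2 = 1)).card ≤ (s.filter (fun i => i % 2 = 0)).card
        · refine ⟨0, by norm_num, ?_⟩
          have h1 : s.card ≤ 2 * (s.filter (fun i => i % 2 = 0)).card := by
            rw [← hparsplit, hfilter1]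
            omega
          have h2 : (s.card : ℝ) ≤ 2 * ((s.filter (fun i => i % 2 = 0)).card : ℝ) := by
            exact_mod_cast h1
          linarith
        · refine ⟨1, by norm_num, ?_⟩
          push_neg at hc01
          have h1 : s.card ≤ 2 * (s.filter (fun i => i % 2 = 1)).card := by
            rw [← hparsplit, hfilter1]
            omega
          have h2 : (s.card : ℝ) ≤ 2 * ((s.filter (fun i => i % 2 = 1)).card : ℝ) := by
            exact_mod_cast h1
          linarith
      have hkcard : k ≤ (s.filter (fun i => i % 2 = r)).card := Nat.ceil_le.2 hrcard
      obtain ⟨t, htsub, htcard⟩ := Finset.exists_subset_card_eq hkcard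
      simp only [Set.mem_iUnion, exists_prop]
      refine ⟨r, Finset.mem_range.2 hr2, t, ?_, ?_⟩
      · rw [hP_def, Finset.mem_powersetCard]
        refine ⟨?_, htcard⟩
        intro i hi
        have h1 := htsub hi
        rw [Finset.mem_filter] at h1
        have h2 := h1.1
        rw [hs_def, Finset.mem_filter] at h2
        rw [Finset.mem_filter]
        exact ⟨h2.1, h1.2⟩
      · refine Set.mem_biInter fun i hi => ?_
        have h1 := htsub hi
        rw [Finset.mem_filter] at h1
        have h2 := h1.1
        rw [hs_def, Finset.mem_filter] at h2
        exact h2.2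
    -- the measure estimate
    have hperT : ∀ r ∈ Finset.range 2, ∀ t ∈ P r,
        μ (⋂ i ∈ t, Bad i) ≤ ((C₀ : ℝ≥0∞) * δ) ^ k := by
      intro r _ t ht
      rw [hP_def, Finset.mem_powersetCard] at ht
      obtain ⟨htsub, htcard⟩ := ht
      have hparity : ∀ i ∈ t, i % 2 = r := fun i hi => (Finset.mem_filter.1 (htsub hi)).2
      set t' := t.image (fun i => i / 2) with ht'_def
      have htt' : ∀ i ∈ t, 2 * (i / 2) + r = i := by
        intro i hi
        have := hparity i hi
        omega
      have hinter : (⋂ i ∈ t, Bad i) = ⋂ j ∈ t', Bad (2 * j + r) := by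
        rw [ht'_def, Finset.set_biInter_finset_image]
        exact Set.iInter₂_congr fun i hi => by rw [htt' i hi]
      have ht'card : t'.card = k := by
        rw [ht'_def, Finset.card_image_of_injOn, htcard]
        intro a ha b hb hab
        have h1 := htt' a ha
        have h2 := htt' b hb
        have hab' : a / 2 = b / 2 := hab
        omega
      have hle' : ∀ j : ℕ, (((2 * j + r) * L : ℕ) : ℤ) - (m : ℤ) ≤
          (((2 * j + r) * L : ℕ) : ℤ) + L - 1 + (m : ℤ) := by
        intro j
        push_cast
        omega
      have hsepw' : ∀ j j' : ℕ, j < j' →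
          (((2 * j + r) * L : ℕ) : ℤ) + L - 1 + (m : ℤ) <
          (((2 * j' + r) * L : ℕ) : ℤ) - (m : ℤ) := by
        intro j j' hjj'
        have h1 : (2 * j + r + 2) * L ≤ (2 * j' + r) * L :=
          Nat.mul_le_mul_right _ (by omega)
        have h2 : (((2 * j + r) * L : ℕ) : ℤ) + 2 * L ≤ (((2 * j' + r) * L : ℕ) : ℤ) := by
          have h3 : ((2 * j + r + 2) * L : ℤ) ≤ ((2 * j' + r) * L : ℤ) := by exact_mod_cast h1
          push_cast at h3 ⊢
          linarith
        have h4 : (2 * m + 2 : ℤ) ≤ (L : ℤ) := by exact_mod_cast hLbig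
        linarith
      have happly := LDE.det_sep_iInter (μ := μ) hC₀ hsep (S := fun j => Bad (2 * j + r))
        (w₁ := fun j => (((2 * j + r) * L : ℕ) : ℤ) - (m : ℤ))
        (w₂ := fun j => (((2 * j + r) * L : ℕ) : ℤ) + L - 1 + (m : ℤ))
        (fun j => hBadmeas _) (fun j => hBadDet _) hle' hsepw' t'
      have hprodδ : ∏ j ∈ t', μ (Bad (2 * j + r)) = δ ^ k := by
        rw [Finset.prod_congr rfl fun j _ => hBadμ (2 * j + r), Finset.prod_const, ht'card]
      calc μ (⋂ i ∈ t, Bad i) = μ (⋂ j ∈ t', Bad (2 * j + r)) := by rw [hinter]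
        _ ≤ (C₀ : ℝ≥0∞) ^ t'.card * ∏ j ∈ t', μ (Bad (2 * j + r)) := happly
        _ = ((C₀ : ℝ≥0∞) * δ) ^ k := by rw [hprodδ, ht'card, mul_pow]
    have hPcard : ∀ r, (P r).card ≤ 2 ^ q := by
      intro r
      have h1 : P r ⊆ ((Finset.range q).filter (fun i => i % 2 = r)).powerset := by
        intro t ht
        rw [hP_def, Finset.mem_powersetCard] at ht
        exact Finset.mem_powerset.2 ht.1
      calc (P r).card ≤ ((Finset.range q).filter (fun i => i % 2 = r)).powerset.card :=
            Finset.card_le_card h1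
        _ = 2 ^ ((Finset.range q).filter (fun i => i % 2 = r)).card := Finset.card_powerset _
        _ ≤ 2 ^ q := Nat.pow_le_pow_right (by norm_num)
            ((Finset.card_filter_le _ _).trans (Finset.card_range q).le)
    have hμE : μ E ≤ ((2 * 2 ^ q : ℕ) : ℝ≥0∞) * ((C₀ : ℝ≥0∞) * δ) ^ k := by
      calc μ E ≤ μ (⋃ r ∈ Finset.range 2, ⋃ t ∈ P r, ⋂ i ∈ t, Bad i) := measure_mono hEcup
        _ ≤ ∑ r ∈ Finset.range 2, μ (⋃ t ∈ P r, ⋂ i ∈ t, Bad i) :=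
            measure_biUnion_finset_le _ _
        _ ≤ ∑ r ∈ Finset.range 2, ∑ t ∈ P r, μ (⋂ i ∈ t, Bad i) :=
            Finset.sum_le_sum fun r _ => measure_biUnion_finset_le _ _
        _ ≤ ∑ r ∈ Finset.range 2, ∑ _t ∈ P r, ((C₀ : ℝ≥0∞) * δ) ^ k :=
            Finset.sum_le_sum fun r hr => Finset.sum_le_sum fun t ht => hperT r hr t ht
        _ = ∑ r ∈ Finset.range 2, ((P r).card : ℝ≥0∞) * ((C₀ : ℝ≥0∞) * δ) ^ k := by
            refine Finset.sum_congr rfl fun r _ => ?_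
            rw [Finset.sum_const, nsmul_eq_mul]
        _ ≤ ∑ _r ∈ Finset.range 2, ((2 ^ q : ℕ) : ℝ≥0∞) * ((C₀ : ℝ≥0∞) * δ) ^ k := by
            refine Finset.sum_le_sum fun r _ => ?_
            have h1 : ((P r).card : ℝ≥0∞) ≤ ((2 ^ q : ℕ) : ℝ≥0∞) := by
              exact_mod_cast hPcard r
            exact mul_le_mul_left h1 _
        _ = ((2 * 2 ^ q : ℕ) : ℝ≥0∞) * ((C₀ : ℝ≥0∞) * δ) ^ k := by
            rw [Finset.sum_const, Finset.card_range, nsmul_eq_mul]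
            push_cast
            ring
    -- convert to a real bound
    have hCδD : (C₀ : ℝ≥0∞) * δ ≤ ENNReal.ofReal D := by
      calc (C₀ : ℝ≥0∞) * δ ≤ (C₀ : ℝ≥0∞) * ENNReal.ofReal (D / (C₀ : ℝ)) :=
            mul_le_mul_right hLδ.le _
        _ = ENNReal.ofReal ((C₀ : ℝ) * (D / (C₀ : ℝ))) := by
            rw [← ENNReal.ofReal_coe_nnreal, ← ENNReal.ofReal_mul (by positivity)]
        _ = ENNReal.ofReal D := by
            congr 1
            field_simp
    have hpowD : ((C₀ : ℝ≥0∞) * δ) ^ k ≤ ENNReal.ofReal (D ^ k) := by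
      rw [ENNReal.ofReal_pow hDpos.le]
      exact pow_le_pow_left' hCδD k
    have hμE2 : μ E ≤ ENNReal.ofReal (((2 * 2 ^ q : ℕ) : ℝ) * D ^ k) := by
      calc μ E ≤ ((2 * 2 ^ q : ℕ) : ℝ≥0∞) * ((C₀ : ℝ≥0∞) * δ) ^ k := hμE
        _ ≤ ((2 * 2 ^ q : ℕ) : ℝ≥0∞) * ENNReal.ofReal (D ^ k) := mul_le_mul_right hpowD _
        _ = ENNReal.ofReal (((2 * 2 ^ q : ℕ) : ℝ) * D ^ k) := by
            rw [← ENNReal.ofReal_natCast (2 * 2 ^ q), ← ENNReal.ofReal_mul (by positivity)]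
    -- final real-number chain
    have hlog2 : (0 : ℝ) ≤ Real.log 2 := Real.log_nonneg (by norm_num)
    have hDk : D ^ k = Real.exp ((k : ℝ) * (-((2 + Real.log 2) / θ))) := by
      rw [hD_def, ← Real.exp_nat_mul]
    have hexpk : (k : ℝ) * (-((2 + Real.log 2) / θ)) ≤ -((q : ℝ) * (2 + Real.log 2)) := by
      have h1 : (q : ℝ) * (2 + Real.log 2) ≤ (k : ℝ) * ((2 + Real.log 2) / θ) := by
        have h2 : θ * (q : ℝ) * ((2 + Real.log 2) / θ) ≤ (k : ℝ) * ((2 + Real.log 2) / θ) :=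
          mul_le_mul_of_nonneg_right hkθ (by positivity)
        have h3 : θ * (q : ℝ) * ((2 + Real.log 2) / θ) = (q : ℝ) * (2 + Real.log 2) := by
          field_simp
        linarith
      linarith
    have h2q : ((2 : ℝ)) ^ q * Real.exp (-((q : ℝ) * (2 + Real.log 2))) =
        Real.exp (-(2 * (q : ℝ))) := by
      have h1 : Real.exp ((q : ℝ) * Real.log 2) = 2 ^ q := by
        rw [Real.exp_nat_mul, Real.exp_log (by norm_num : (0:ℝ) < 2)]
      have h2 : Real.exp (-((q : ℝ) * (2 + Real.log 2))) =
          Real.exp (-(2 * (q : ℝ))) * (Real.exp ((q : ℝ) * Real.log 2))⁻¹ := by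
        rw [← Real.exp_neg, ← Real.exp_add]
        congr 1
        ring
      rw [h2, h1]
      have h3 : (0 : ℝ) < (2 : ℝ) ^ q := by positivity
      field_simp
    have hcn : c * (n : ℝ) ≤ 2 * (q : ℝ) + 2 := by
      have h1 : (n : ℝ) < (L : ℝ) * ((q : ℝ) + 1) := by
        have h2 : n < L * q + L := by omega
        have h3 : ((n : ℕ) : ℝ) < ((L * q + L : ℕ) : ℝ) := by exact_mod_cast h2
        push_cast at h3
        linarith
      rw [hc_def]
      rw [div_mul_eq_mul_div, div_le_iff₀ hLpos]
      nlinarith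
    have hfinal : ((2 * 2 ^ q : ℕ) : ℝ) * D ^ k ≤ 2 * Real.exp 2 * Real.exp (-c * n) := by
      have hA : ((2 * 2 ^ q : ℕ) : ℝ) = 2 * (2 : ℝ) ^ q := by push_cast; ring
      have hB1 : D ^ k ≤ Real.exp (-((q : ℝ) * (2 + Real.log 2))) := by
        rw [hDk]
        exact Real.exp_le_exp.2 hexpk
      have hB2 : ((2 * 2 ^ q : ℕ) : ℝ) * D ^ k ≤ 2 * Real.exp (-(2 * (q : ℝ))) := by
        rw [hA]
        calc 2 * (2 : ℝ) ^ q * D ^ k ≤ 2 * (2 : ℝ) ^ q *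
              Real.exp (-((q : ℝ) * (2 + Real.log 2))) := by
              apply mul_le_mul_of_nonneg_left hB1 (by positivity)
          _ = 2 * Real.exp (-(2 * (q : ℝ))) := by rw [mul_assoc, h2q]
      have hB3 : Real.exp (-(2 * (q : ℝ))) ≤ Real.exp 2 * Real.exp (-c * n) := by
        rw [← Real.exp_add]
        apply Real.exp_le_exp.2
        linarith
      calc ((2 * 2 ^ q : ℕ) : ℝ) * D ^ k ≤ 2 * Real.exp (-(2 * (q : ℝ))) := hB2
        _ ≤ 2 * (Real.exp 2 * Real.exp (-c * n)) := by
            apply mul_le_mul_of_nonneg_left hB3 (by norm_num)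
        _ = 2 * Real.exp 2 * Real.exp (-c * n) := by ring
    have hstrict : 2 * Real.exp 2 * Real.exp (-c * n) < C * Real.exp (-c * n) := by
      have h1 : (1 : ℝ) ≤ Real.exp (c * n₀) := by
        calc (1 : ℝ) = Real.exp 0 := Real.exp_zero.symm
          _ ≤ Real.exp (c * n₀) := Real.exp_le_exp.2 (by positivity)
      have h2 : 2 * Real.exp 2 < C := by
        rw [hC_def]
        nlinarith [Real.exp_pos (2 : ℝ)]
      exact mul_lt_mul_of_pos_right h2 (Real.exp_pos _)
    calc μ E ≤ ENNReal.ofReal (((2 * 2 ^ q : ℕ) : ℝ) * D ^ k) := hμE2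
      _ ≤ ENNReal.ofReal (2 * Real.exp 2 * Real.exp (-c * n)) := ENNReal.ofReal_le_ofReal hfinal
      _ < ENNReal.ofReal (C * Real.exp (-c * n)) := by
          rw [ENNReal.ofReal_lt_ofReal_iff (by positivity)]
          exact hstrict
end

section
/- Consider the random dimer model: for λ ∈ (-2,2) with λ ≠ 0, potentials V_ω with V_ω(2n) = V_ω(2n+1) = ω_n where ω_n ∈ {0, λ}. At energy E = 0 (and similarly E = λ), the products of transfer matrices A^E_n(ω) are uniformly bounded in n for every ω; consequently the Lyapunov exponent vanishes at E = 0 and E = λ. -/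
open Matrix Filter

attribute [local instance] Matrix.normedAddCommGroup

attribute [local instance] Matrix.normedSpace

noncomputable def transferMatrix (V : ℤ → ℝ) (E : ℝ) (j : ℤ) : Matrix (Fin 2) (Fin 2) ℝ :=
  !![E - V j, -1; 1, 0]

/-- The product of transfer matrices over sites `0, …, n−1`. -/
noncomputable def transferProd (V : ℤ → ℝ) (E : ℝ) (n : ℕ) : Matrix (Fin 2) (Fin 2) ℝ :=
  ((List.range n).reverse.map fun m : ℕ => transferMatrix V E (m : ℤ)).prod

lemma dimer17_transferProd_zero (V : ℤ → ℝ) (E : ℝ) : transferProd V E 0 = 1 := by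
  simp [transferProd]

lemma dimer17_transferProd_succ (V : ℤ → ℝ) (E : ℝ) (n : ℕ) :
    transferProd V E (n + 1) = transferMatrix V E n * transferProd V E n := by
  unfold transferProd
  rw [List.range_succ]
  simp

lemma dimer17_transferProd_det (V : ℤ → ℝ) (E : ℝ) (n : ℕ) : (transferProd V E n).det = 1 := by
  unfold transferProd
  rw [show ((List.range n).reverse.map fun m : ℕ => transferMatrix V E (m : ℤ)).prod.det
    = (((List.range n).reverse.map fun m : ℕ => transferMatrix V E (m : ℤ)).map Matrix.det).prod by
      simpa using map_list_prod (Matrix.detMonoidHom (n := Fin 2) (R := ℝ))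
        (((List.range n).reverse.map fun m : ℕ => transferMatrix V E (m : ℤ)))]
  rw [List.map_map]
  apply List.prod_eq_one
  intro x hx
  rw [List.mem_map] at hx
  obtain ⟨m, -, rfl⟩ := hx
  simp [transferMatrix, Matrix.det_fin_two_of]

lemma dimer17_mul_norm_le (A B : Matrix (Fin 2) (Fin 2) ℝ) : ‖A * B‖ ≤ 2 * ‖A‖ * ‖B‖ := by
  rw [Matrix.norm_le_iff (by positivity)]
  intro i j
  rw [Matrix.mul_apply, Fin.sum_univ_two]
  have h00 := Matrix.norm_entry_le_entrywise_sup_norm A (i := i) (j := 0)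
  have h01 := Matrix.norm_entry_le_entrywise_sup_norm A (i := i) (j := 1)
  have h10 := Matrix.norm_entry_le_entrywise_sup_norm B (i := 0) (j := j)
  have h11 := Matrix.norm_entry_le_entrywise_sup_norm B (i := 1) (j := j)
  simp only [Real.norm_eq_abs] at *
  calc |A i 0 * B 0 j + A i 1 * B 1 j| ≤ |A i 0 * B 0 j| + |A i 1 * B 1 j| := abs_add_le _ _
    _ = |A i 0| * |B 0 j| + |A i 1| * |B 1 j| := by rw [abs_mul, abs_mul]
    _ ≤ 2 * ‖A‖ * ‖B‖ := by
        nlinarith [abs_nonneg (A i 0), abs_nonneg (A i 1), abs_nonneg (B 0 j),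
          abs_nonneg (B 1 j), norm_nonneg A, norm_nonneg B]

/-- An `SL₂`-type matrix with `M² = tM − 1` and `|t| < 2` (elliptic case) has uniformly
bounded powers, via the Chebyshev/rotation formula. -/
lemma dimer17_pow_bounded (M : Matrix (Fin 2) (Fin 2) ℝ) (t : ℝ) (ht : |t| < 2)
    (hM : M * M = t • M - 1) : ∃ C : ℝ, 0 < C ∧ ∀ k : ℕ, ‖M ^ k‖ ≤ C := by
  have ht' := abs_lt.mp ht
  set θ := Real.arccos (t / 2) with hθ
  have hcos : Real.cos θ = t / 2 := Real.cos_arccos (by linarith [ht'.1]) (by linarith [ht'.2])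
  have hsin : 0 < Real.sin θ := by
    rw [hθ, Real.sin_arccos]
    exact Real.sqrt_pos.mpr (by nlinarith [ht'.1, ht'.2])
  set s := Real.sin θ with hs
  have key : ∀ k : ℕ, M ^ k = (Real.sin (k * θ) / s) • M - (Real.sin ((k - 1 : ℝ) * θ) / s) • 1 := by
    intro k
    induction k with
    | zero =>
      simp only [pow_zero, Nat.cast_zero, zero_mul, Real.sin_zero, zero_div, zero_smul, zero_sub]
      rw [show (-1:ℝ) * θ = -θ by ring, Real.sin_neg, ← hs, neg_div, neg_smul, neg_neg,
        div_self hsin.ne', one_smul]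
    | succ k ih =>
      have hstep : M ^ (k + 1) = M * M ^ k := pow_succ' M k
      rw [hstep, ih, mul_sub, mul_smul_comm, mul_smul_comm, hM, mul_one, smul_sub, smul_smul]
      have e1 : Real.sin ((k + 1 : ℕ) * θ) = t * Real.sin (k * θ) - Real.sin ((k - 1 : ℝ) * θ) := by
        push_cast
        rw [show ((k : ℝ) + 1) * θ = k * θ + θ by ring, show ((k : ℝ) - 1) * θ = k * θ - θ by ring,
          Real.sin_add, Real.sin_sub, hcos]
        ring
      have e2 : (((k + 1 : ℕ) : ℝ) - 1) * θ = (k : ℝ) * θ := by push_cast; ring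
      rw [e1, e2]
      ext i j
      simp [Matrix.sub_apply, Matrix.smul_apply, Matrix.one_apply]
      ring
  refine ⟨(‖M‖ + ‖(1 : Matrix (Fin 2) (Fin 2) ℝ)‖) / s + 1, by positivity, fun k => ?_⟩
  rw [key k]
  have b1 : |Real.sin (k * θ)| ≤ 1 := Real.abs_sin_le_one _
  have b2 : |Real.sin (((k : ℝ) - 1) * θ)| ≤ 1 := Real.abs_sin_le_one _
  calc ‖(Real.sin (k * θ) / s) • M - (Real.sin ((k - 1 : ℝ) * θ) / s) • 1‖
      ≤ ‖(Real.sin (k * θ) / s) • M‖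
        + ‖(Real.sin ((k - 1 : ℝ) * θ) / s) • (1 : Matrix (Fin 2) (Fin 2) ℝ)‖ := norm_sub_le _ _
    _ = |Real.sin (k * θ)| / s * ‖M‖
        + |Real.sin (((k:ℝ) - 1) * θ)| / s * ‖(1 : Matrix (Fin 2) (Fin 2) ℝ)‖ := by
        rw [norm_smul, norm_smul, Real.norm_eq_abs, Real.norm_eq_abs, abs_div, abs_div,
          abs_of_pos hsin]
    _ ≤ 1 / s * ‖M‖ + 1 / s * ‖(1 : Matrix (Fin 2) (Fin 2) ℝ)‖ := by
        have := norm_nonneg M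
        have := norm_nonneg (1 : Matrix (Fin 2) (Fin 2) ℝ)
        gcongr
    _ ≤ (‖M‖ + ‖(1 : Matrix (Fin 2) (Fin 2) ℝ)‖) / s + 1 := by
        have hs' : 0 < s := hsin
        have : 1 / s * ‖M‖ + 1 / s * ‖(1 : Matrix (Fin 2) (Fin 2) ℝ)‖
            = (‖M‖ + ‖(1 : Matrix (Fin 2) (Fin 2) ℝ)‖) / s := by ring
        linarith


lemma dimer17_lower_bound (P : Matrix (Fin 2) (Fin 2) ℝ) (hdet1 : P.det = 1) :
    (Real.sqrt 2)⁻¹ ≤ ‖P‖ := by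
  rw [Matrix.det_fin_two] at hdet1
  have e00 : |P 0 0| ≤ ‖P‖ := by
    simpa [Real.norm_eq_abs] using Matrix.norm_entry_le_entrywise_sup_norm P (i := 0) (j := 0)
  have e11 : |P 1 1| ≤ ‖P‖ := by
    simpa [Real.norm_eq_abs] using Matrix.norm_entry_le_entrywise_sup_norm P (i := 1) (j := 1)
  have e01 : |P 0 1| ≤ ‖P‖ := by
    simpa [Real.norm_eq_abs] using Matrix.norm_entry_le_entrywise_sup_norm P (i := 0) (j := 1)
  have e10 : |P 1 0| ≤ ‖P‖ := by
    simpa [Real.norm_eq_abs] using Matrix.norm_entry_le_entrywise_sup_norm P (i := 1) (j := 0)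
  have h1 : (1 : ℝ) ≤ 2 * ‖P‖ ^ 2 := by
    have habs1 : (1 : ℝ) = |P 0 0 * P 1 1 - P 0 1 * P 1 0| := by rw [hdet1]; norm_num
    have habs2 : |P 0 0 * P 1 1 - P 0 1 * P 1 0| ≤ |P 0 0 * P 1 1| + |P 0 1 * P 1 0| := by
      rw [sub_eq_add_neg]
      exact (abs_add_le _ _).trans (by rw [abs_neg])
    have h3 : |P 0 0| * |P 1 1| ≤ ‖P‖ * ‖P‖ :=
      mul_le_mul e00 e11 (abs_nonneg _) (norm_nonneg _)
    have h4 : |P 0 1| * |P 1 0| ≤ ‖P‖ * ‖P‖ :=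
      mul_le_mul e01 e10 (abs_nonneg _) (norm_nonneg _)
    rw [abs_mul, abs_mul] at habs2
    nlinarith
  have hs2 : (0 : ℝ) < Real.sqrt 2 := Real.sqrt_pos.mpr (by norm_num)
  have hsq : Real.sqrt 2 * Real.sqrt 2 = 2 := Real.mul_self_sqrt (by norm_num)
  rw [inv_le_iff_one_le_mul₀ hs2]
  nlinarith [norm_nonneg P]

/-- the random dimer model.  For `λ ∈ (−2,2) \ {0}` and a potential with
`V(2n) = V(2n+1) = ω_n ∈ {0, λ}`, the transfer matrix products at energy `E ∈ {0, λ}`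
are uniformly bounded in `n`, and consequently the Lyapunov exponent vanishes at these
two energies. -/
theorem random_dimer_bounded_transfer_and_zero_exponent
    (lam : ℝ) (hlam0 : lam ≠ 0) (hlam2 : |lam| < 2)
    (ωseq : ℤ → ℝ) (hωseq : ∀ n : ℤ, ωseq n = 0 ∨ ωseq n = lam)
    (V : ℤ → ℝ) (hV : ∀ n : ℤ, V (2 * n) = ωseq n ∧ V (2 * n + 1) = ωseq n)
    (E : ℝ) (hE : E = 0 ∨ E = lam) :
    (∃ C : ℝ, ∀ n : ℕ, ‖transferProd V E n‖ ≤ C) ∧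
    Tendsto (fun n : ℕ => Real.log ‖transferProd V E n‖ / n) atTop (nhds 0) := by
  have hlam' := abs_lt.mp hlam2
  have hlamsq : 0 < lam * lam := by
    rcases lt_or_gt_of_ne hlam0 with h | h <;> nlinarith
  have hlamsq4 : lam * lam < 4 := by nlinarith [hlam'.1, hlam'.2]
  -- the nonzero one-step value
  set c : ℝ := 2 * E - lam with hc
  have hc2 : c * c = lam * lam := by
    rcases hE with h | h <;> rw [hc, h] <;> ring
  have hcabs : |c| < 2 := by
    nlinarith [abs_nonneg c, sq_abs c, sq_nonneg (|c| - 2)]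
  -- values of the one-step coefficients
  have ha : ∀ m : ℤ, E - ωseq m = 0 ∨ E - ωseq m = c := by
    intro m
    rcases hωseq m with h | h <;> rcases hE with h' | h'
    · left; rw [h, h']; ring
    · right; rw [h, h', hc, h']; ring
    · right; rw [h, h', hc, h']; ring
    · left; rw [h, h']; ring
  -- the elliptic dimer block
  set M : Matrix (Fin 2) (Fin 2) ℝ := !![c * c - 1, -c; c, -1] with hMdef
  have hMsq : M * M = (c * c - 2) • M - 1 := by
    rw [hMdef, Matrix.mul_fin_two]
    ext i j
    fin_cases i <;> fin_cases j <;>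
      simp [Matrix.smul_apply, Matrix.sub_apply, Matrix.one_apply] <;> ring
  have htabs : |c * c - 2| < 2 := by
    rw [hc2]; rw [abs_lt]; constructor <;> nlinarith
  obtain ⟨C₀, hC₀pos, hC₀⟩ := dimer17_pow_bounded M (c * c - 2) htabs hMsq
  -- the two-step blocks
  have block : ∀ m : ℕ,
      transferMatrix V E (2 * m + 1) * transferMatrix V E (2 * m)
        = -1 ∨
      transferMatrix V E (2 * m + 1) * transferMatrix V E (2 * m) = M := by
    intro m
    have h1 : V (2 * (m : ℤ)) = ωseq m := (hV m).1
    have h2 : V (2 * (m : ℤ) + 1) = ωseq m := (hV m).2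
    have hT : transferMatrix V E (2 * m + 1) * transferMatrix V E (2 * m)
        = !![(E - ωseq m) * (E - ωseq m) - 1, -(E - ωseq m); E - ωseq m, -1] := by
      unfold transferMatrix
      rw [h1, h2, Matrix.mul_fin_two]
      ext i j
      fin_cases i <;> fin_cases j <;> simp <;> ring
    rcases ha m with h | h
    · left
      rw [hT, h]
      ext i j
      fin_cases i <;> fin_cases j <;>
        simp [Matrix.neg_apply, Matrix.one_apply]
    · right
      rw [hT, h, hMdef]
  -- structure of even products: a sign times a power of M
  have even_struct : ∀ m : ℕ, ∃ (k : ℕ) (ε : ℝ), (ε = 1 ∨ ε = -1) ∧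
      transferProd V E (2 * m) = ε • M ^ k := by
    intro m
    induction m with
    | zero =>
      exact ⟨0, 1, Or.inl rfl, by simp [dimer17_transferProd_zero]⟩
    | succ m ih =>
      obtain ⟨k, ε, hε, hP⟩ := ih
      have hstep : transferProd V E (2 * (m + 1))
          = (transferMatrix V E (2 * m + 1) * transferMatrix V E (2 * m))
            * transferProd V E (2 * m) := by
        have : 2 * (m + 1) = (2 * m + 1) + 1 := by ring
        rw [this, dimer17_transferProd_succ, dimer17_transferProd_succ, mul_assoc]
        norm_num
      rcases block m with h | h
      · refine ⟨k, -ε, ?_, ?_⟩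
        · rcases hε with h' | h' <;> simp [h']
        · rw [hstep, h, hP]; simp
      · refine ⟨k + 1, ε, hε, ?_⟩
        rw [hstep, h, hP, mul_smul_comm, ← pow_succ']
  -- norm of a single transfer matrix at the relevant sites
  have hTnorm : ∀ m : ℕ, ‖transferMatrix V E (2 * m)‖ ≤ 2 := by
    intro m
    have h1 : V (2 * (m : ℤ)) = ωseq m := (hV m).1
    rw [Matrix.norm_le_iff (by norm_num)]
    intro i j
    unfold transferMatrix
    have hEω : |E - ωseq m| ≤ 2 := by
      rcases ha m with h | h
      · rw [h]; norm_num
      · rw [h]; exact le_of_lt hcabs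
    fin_cases i <;> fin_cases j <;>
      simp [h1, Real.norm_eq_abs] <;> try norm_num
    · push_cast at *
      rw [show (2 : ℤ) * (m : ℤ) = ((2 * m : ℕ) : ℤ) by push_cast; ring] at h1
      simpa [h1] using hEω
  -- the uniform bound
  have hbound : ∀ n : ℕ, ‖transferProd V E n‖ ≤ 4 * C₀ := by
    intro n
    rcases Nat.even_or_odd n with ⟨m, hm⟩ | ⟨m, hm⟩
    · obtain ⟨k, ε, hε, hP⟩ := even_struct m
      rw [show n = 2 * m by omega, hP, norm_smul]
      have : ‖ε‖ = 1 := by rcases hε with h | h <;> simp [h]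
      rw [this, one_mul]
      calc ‖M ^ k‖ ≤ C₀ := hC₀ k
        _ ≤ 4 * C₀ := by linarith
    · obtain ⟨k, ε, hε, hP⟩ := even_struct m
      rw [show n = 2 * m + 1 by omega, dimer17_transferProd_succ]
      calc ‖transferMatrix V E (2 * m) * transferProd V E (2 * m)‖
          ≤ 2 * ‖transferMatrix V E (2 * m)‖ * ‖transferProd V E (2 * m)‖ :=
            dimer17_mul_norm_le _ _
        _ ≤ 2 * 2 * C₀ := by
            have h1 := hTnorm m
            have h2 : ‖transferProd V E (2 * m)‖ ≤ C₀ := by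
              rw [hP, norm_smul]
              have : ‖ε‖ = 1 := by rcases hε with h | h <;> simp [h]
              rw [this, one_mul]
              exact hC₀ k
            have := norm_nonneg (transferMatrix V E (2 * m))
            have := norm_nonneg (transferProd V E (2 * m))
            nlinarith
        _ = 4 * C₀ := by ring
  refine ⟨⟨4 * C₀, hbound⟩, ?_⟩
  -- lower bound from the determinant
  have hlow : ∀ n : ℕ, (Real.sqrt 2)⁻¹ ≤ ‖transferProd V E n‖ := fun n =>
    dimer17_lower_bound _ (dimer17_transferProd_det V E n)
  -- squeeze
  set C' : ℝ := max (4 * C₀) 1 with hC'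
  have hC'1 : (1 : ℝ) ≤ C' := le_max_right _ _
  set K : ℝ := Real.log C' + Real.log (Real.sqrt 2) with hK
  have hlog2 : (0 : ℝ) ≤ Real.log (Real.sqrt 2) :=
    Real.log_nonneg (by nlinarith [Real.sq_sqrt (by norm_num : (0:ℝ) ≤ 2), Real.sqrt_nonneg 2])
  have hlogC' : (0 : ℝ) ≤ Real.log C' := Real.log_nonneg hC'1
  have hsqrtpos : (0 : ℝ) < (Real.sqrt 2)⁻¹ := by positivity
  have habs : ∀ n : ℕ, |Real.log ‖transferProd V E n‖| ≤ K := by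
    intro n
    have hlo := hlow n
    have hhi : ‖transferProd V E n‖ ≤ C' := le_trans (hbound n) (le_max_left _ _)
    have hpos : (0 : ℝ) < ‖transferProd V E n‖ := lt_of_lt_of_le hsqrtpos hlo
    rw [abs_le]
    constructor
    · have : Real.log ((Real.sqrt 2)⁻¹) ≤ Real.log ‖transferProd V E n‖ :=
        Real.log_le_log hsqrtpos hlo
      rw [Real.log_inv] at this
      linarith
    · have : Real.log ‖transferProd V E n‖ ≤ Real.log C' := Real.log_le_log hpos hhi
      linarith
  apply squeeze_zero_norm (a := fun n : ℕ => K / n) _ (tendsto_const_div_atTop_nhds_zero_nat K)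
  intro n
  rcases Nat.eq_zero_or_pos n with rfl | hn
  · simp
  · have hn' : (0 : ℝ) < n := by exact_mod_cast hn
    rw [Real.norm_eq_abs, abs_div, abs_of_pos hn']
    exact div_le_div_of_nonneg_right (habs n) hn'.le
end

section
/- Let T : Ω → Ω be a homeomorphism of a compact metric space, f : Ω → ℝ continuous, and ω₀ ∈ Ω a point whose orbit {Tⁿω₀ : n ∈ ℤ} is dense in Ω. Then for every ω ∈ Ω, the spectrum of the Schrödinger operator H_ω with potential V_ω(n) = f(Tⁿω) is contained in the spectrum of H_{ω₀}. -/
open scoped ComplexConjugate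
open Filter Topology

noncomputable section SchAux

namespace SchAux

abbrev E2 : Type := lp (fun _ : ℤ => ℂ) 2

lemma memℓp_reindex (e : ℤ ≃ ℤ) (ψ : E2) :
    Memℓp (fun n => (ψ : ∀ _ : ℤ, ℂ) (e n)) 2 := by
  apply memℓp_gen
  have hs : Summable fun n : ℤ => ‖(ψ : ∀ _ : ℤ, ℂ) n‖ ^ (2 : ENNReal).toReal :=
    (memℓp_gen_iff (by norm_num)).1 (lp.memℓp ψ)
  exact e.summable_iff.2 hs

/-- the reindexing map as a linear isometry equivalence of `ℓ²(ℤ)` -/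
def reindexLie (e : ℤ ≃ ℤ) : E2 ≃ₗᵢ[ℂ] E2 where
  toFun ψ := ⟨fun n => (ψ : ∀ _ : ℤ, ℂ) (e n), memℓp_reindex e ψ⟩
  invFun ψ := ⟨fun n => (ψ : ∀ _ : ℤ, ℂ) (e.symm n), memℓp_reindex e.symm ψ⟩
  map_add' ψ φ := by ext n; simp [lp.coeFn_add]; rfl
  map_smul' c ψ := by ext n; simp [lp.coeFn_smul]
  left_inv ψ := by ext n; simp
  right_inv ψ := by ext n; simp
  norm_map' ψ := by
    rw [lp.norm_eq_tsum_rpow (by norm_num), lp.norm_eq_tsum_rpow (by norm_num)]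
    congr 1
    exact e.tsum_eq (f := fun n => ‖(ψ : ∀ _ : ℤ, ℂ) n‖ ^ (2 : ENNReal).toReal)

@[simp] lemma reindexLie_apply (e : ℤ ≃ ℤ) (ψ : E2) (n : ℤ) :
    ((reindexLie e ψ : E2) : ∀ _ : ℤ, ℂ) n = (ψ : ∀ _ : ℤ, ℂ) (e n) := rfl

@[simp] lemma reindexLie_symm (e : ℤ ≃ ℤ) : (reindexLie e).symm = reindexLie e.symm := rfl

lemma memℓp_mul {V : ℤ → ℝ} {C : ℝ} (hC : ∀ n, |V n| ≤ C) (ψ : E2) :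
    Memℓp (fun n => (V n : ℂ) * (ψ : ∀ _ : ℤ, ℂ) n) 2 := by
  apply memℓp_gen
  have hs : Summable fun n : ℤ => ‖(ψ : ∀ _ : ℤ, ℂ) n‖ ^ (2 : ENNReal).toReal :=
    (memℓp_gen_iff (by norm_num)).1 (lp.memℓp ψ)
  have hC0 : 0 ≤ C := le_trans (abs_nonneg _) (hC 0)
  refine Summable.of_nonneg_of_le (fun n => by positivity)
    (fun n => ?_) (hs.mul_left (C ^ (2 : ENNReal).toReal))
  rw [ENNReal.toReal_ofNat] at *
  rw [show ‖(V n : ℂ) * (ψ : ∀ _ : ℤ, ℂ) n‖ = |V n| * ‖(ψ : ∀ _ : ℤ, ℂ) n‖ from by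
      rw [norm_mul, Complex.norm_real, Real.norm_eq_abs],
    ← Real.mul_rpow hC0 (norm_nonneg _)]
  exact Real.rpow_le_rpow (by positivity) (by gcongr; exact hC n) (by norm_num)

lemma mul_norm_le {V : ℤ → ℝ} {C : ℝ} (hC : ∀ n, |V n| ≤ C) (ψ : E2)
    (φ : E2) (hφ : ∀ n, (φ : ∀ _ : ℤ, ℂ) n = (V n : ℂ) * (ψ : ∀ _ : ℤ, ℂ) n) :
    ‖φ‖ ≤ C * ‖ψ‖ := by
  have hC0 : 0 ≤ C := le_trans (abs_nonneg _) (hC 0)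
  refine lp.norm_le_of_tsum_le (by norm_num) (by positivity) ?_
  rw [ENNReal.toReal_ofNat]
  have hsum := lp.hasSum_norm (p := 2) (f := ψ) (by norm_num)
  rw [ENNReal.toReal_ofNat] at hsum
  have h2 : (∑' n : ℤ, ‖(ψ : ∀ _ : ℤ, ℂ) n‖ ^ (2:ℝ)) = ‖ψ‖ ^ (2:ℝ) := hsum.tsum_eq
  calc (∑' n : ℤ, ‖(φ : ∀ _ : ℤ, ℂ) n‖ ^ (2:ℝ))
      ≤ ∑' n : ℤ, C ^ (2:ℝ) * ‖(ψ : ∀ _ : ℤ, ℂ) n‖ ^ (2:ℝ) := by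
        refine Summable.tsum_le_tsum (fun n => ?_) ?_ (hsum.summable.mul_left _)
        · rw [hφ n, show ‖(V n : ℂ) * (ψ : ∀ _ : ℤ, ℂ) n‖ = |V n| * ‖(ψ : ∀ _ : ℤ, ℂ) n‖ from by
              rw [norm_mul, Complex.norm_real, Real.norm_eq_abs],
            ← Real.mul_rpow hC0 (norm_nonneg _)]
          exact Real.rpow_le_rpow (by positivity) (by gcongr; exact hC n) (by norm_num)
        · have := lp.hasSum_norm (p := 2) (f := φ) (by norm_num)
          rw [ENNReal.toReal_ofNat] at this
          exact this.summable
    _ = (C * ‖ψ‖) ^ (2:ℝ) := by rw [tsum_mul_left, h2, Real.mul_rpow hC0 (norm_nonneg _)]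

/-- multiplication by a bounded real potential, as a continuous linear map. -/
def mulOp (V : ℤ → ℝ) (C : ℝ) (hC : ∀ n, |V n| ≤ C) : E2 →L[ℂ] E2 :=
  LinearMap.mkContinuous
    { toFun := fun ψ => ⟨fun n => (V n : ℂ) * (ψ : ∀ _ : ℤ, ℂ) n, memℓp_mul hC ψ⟩
      map_add' := fun ψ φ => by ext n; simp [lp.coeFn_add]; ring_nf; rfl
      map_smul' := fun c ψ => by ext n; simp [lp.coeFn_smul]; ring }
    C (fun ψ => mul_norm_le hC ψ _ (fun n => rfl))

@[simp] lemma mulOp_apply (V : ℤ → ℝ) (C : ℝ) (hC : ∀ n, |V n| ≤ C) (ψ : E2) (n : ℤ) :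
    ((mulOp V C hC ψ : E2) : ∀ _ : ℤ, ℂ) n = (V n : ℂ) * (ψ : ∀ _ : ℤ, ℂ) n := rfl

-- adjoint of an isometric equivalence (as CLM) is the inverse
lemma adjoint_lie (U : E2 ≃ₗᵢ[ℂ] E2) :
    ContinuousLinearMap.adjoint (U : E2 →L[ℂ] E2) = (U.symm : E2 →L[ℂ] E2) := by
  symm
  rw [ContinuousLinearMap.eq_adjoint_iff]
  intro x y
  calc inner ℂ ((U.symm : E2 →L[ℂ] E2) x) y
      = inner ℂ (U ((U.symm : E2 →L[ℂ] E2) x)) (U y) := (U.inner_map_map _ _).symm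
    _ = inner ℂ x ((U : E2 →L[ℂ] E2) y) := by
        simp [LinearIsometryEquiv.coe_coe]

lemma mulOp_selfAdjoint (V : ℤ → ℝ) (C : ℝ) (hC : ∀ n, |V n| ≤ C) :
    IsSelfAdjoint (mulOp V C hC) := by
  rw [ContinuousLinearMap.isSelfAdjoint_iff']
  symm
  rw [ContinuousLinearMap.eq_adjoint_iff]
  intro x y
  rw [lp.inner_eq_tsum, lp.inner_eq_tsum]
  refine tsum_congr fun n => ?_
  simp only [mulOp_apply, RCLike.inner_apply, map_mul, Complex.conj_ofReal]
  ring

/-- shift by `m`: `(Sm m ψ)(n) = ψ(n+m)` -/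
def Sm (m : ℤ) : E2 ≃ₗᵢ[ℂ] E2 := reindexLie (Equiv.addRight m)

@[simp] lemma Sm_apply (m : ℤ) (ψ : E2) (n : ℤ) :
    ((Sm m ψ : E2) : ∀ _ : ℤ, ℂ) n = (ψ : ∀ _ : ℤ, ℂ) (n + m) := rfl

@[simp] lemma Sm_symm_apply (m : ℤ) (ψ : E2) (n : ℤ) :
    (((Sm m).symm ψ : E2) : ∀ _ : ℤ, ℂ) n = (ψ : ∀ _ : ℤ, ℂ) (n - m) := rfl

/-- the shift as a unit in the ring of continuous linear maps -/
def SmU (m : ℤ) : (E2 →L[ℂ] E2)ˣ where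
  val := (Sm m : E2 →L[ℂ] E2)
  inv := ((Sm m).symm : E2 →L[ℂ] E2)
  val_inv := by ext ψ n; simp [ContinuousLinearMap.mul_apply]
  inv_val := by ext ψ n; simp [ContinuousLinearMap.mul_apply]

@[simp] lemma SmU_val (m : ℤ) : (↑(SmU m) : E2 →L[ℂ] E2) = (Sm m : E2 →L[ℂ] E2) := rfl

@[simp] lemma SmU_inv (m : ℤ) :
    (↑(SmU m)⁻¹ : E2 →L[ℂ] E2) = ((Sm m).symm : E2 →L[ℂ] E2) := rfl

end SchAux

end SchAux

set_option maxHeartbeats 1000000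
set_option synthInstance.maxHeartbeats 100000

/-- if `T` is a homeomorphism of a compact metric space `Ω`, `f : Ω → ℝ`
is continuous, and the orbit of `ω₀` is dense, then for every `ω` the spectrum of the
Schrödinger operator `H_ω` with potential `V_ω(n) = f(Tⁿω)` is contained in the
spectrum of `H_{ω₀}`. -/
theorem dense_orbit_spectrum_inclusion
    {Ω : Type*} [MetricSpace Ω] [CompactSpace Ω]
    (T : Equiv.Perm Ω) (hT : Continuous T) (hTinv : Continuous T.symm)
    (f : Ω → ℝ) (hf : Continuous f)
    (Hop : Ω → (lp (fun _ : ℤ => ℂ) 2 →L[ℂ] lp (fun _ : ℤ => ℂ) 2))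
    (hHop : ∀ (ω : Ω) (ψ : lp (fun _ : ℤ => ℂ) 2) (n : ℤ),
      (Hop ω ψ : ∀ _ : ℤ, ℂ) n
        = (ψ : ∀ _ : ℤ, ℂ) (n + 1) + (ψ : ∀ _ : ℤ, ℂ) (n - 1)
          + (f ((T ^ n) ω) : ℂ) * (ψ : ∀ _ : ℤ, ℂ) n)
    (ω₀ : Ω) (hdense : Dense {x : Ω | ∃ n : ℤ, (T ^ n) ω₀ = x}) :
    ∀ ω : Ω, spectrum ℂ (Hop ω) ⊆ spectrum ℂ (Hop ω₀) := by
  classical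
  open SchAux in
  intro ω z hz
  by_contra hz0
  -- uniform bound on the potential
  have : Nonempty Ω := ⟨ω⟩
  obtain ⟨C, hC⟩ : ∃ C : ℝ, ∀ x : Ω, |f x| ≤ C := by
    obtain ⟨x₀, -, hx₀⟩ := isCompact_univ.exists_isMaxOn Set.univ_nonempty
      (continuous_abs.comp hf).continuousOn
    exact ⟨|f x₀|, fun x => hx₀ (Set.mem_univ x)⟩
  -- continuity of integer powers of T
  have contZ : ∀ m : ℤ, Continuous ⇑(T ^ m) := by
    intro m
    induction m using Int.induction_on with
    | zero => simpa using continuous_id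
    | succ n ih =>
        have h : (T : Equiv.Perm Ω) ^ ((n : ℤ) + 1) = T ^ (n : ℤ) * T := zpow_add_one T n
        rw [h]
        simpa [Equiv.Perm.coe_mul] using ih.comp hT
    | pred n ih =>
        have h : (T : Equiv.Perm Ω) ^ (-(n : ℤ) - 1) = T ^ (-(n : ℤ)) * T⁻¹ := zpow_sub_one T _
        rw [h]
        have hTi : Continuous ⇑(T⁻¹ : Equiv.Perm Ω) := by simpa [Equiv.Perm.inv_def] using hTinv
        simpa [Equiv.Perm.coe_mul] using ih.comp hTi
  -- potential
  set V : Ω → ℤ → ℝ := fun x n => f ((T ^ n) x) with hV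
  have hCV : ∀ x : Ω, ∀ n : ℤ, |V x n| ≤ C := fun x n => hC _
  -- representation of the operator
  have hHrep : ∀ x : Ω,
      Hop x = (Sm 1 : E2 →L[ℂ] E2) + ((Sm 1).symm : E2 →L[ℂ] E2) + mulOp (V x) C (hCV x) := by
    intro x
    ext ψ n
    simp only [ContinuousLinearMap.add_apply, lp.coeFn_add, Pi.add_apply, mulOp_apply,
      LinearIsometryEquiv.coe_coe, LinearIsometryEquiv.coe_coe'', Sm_apply, Sm_symm_apply, hHop, hV]
  -- self-adjointness
  have hsa : ∀ x : Ω, IsSelfAdjoint (Hop x) := by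
    intro x
    rw [hHrep x]
    have h1 : IsSelfAdjoint ((Sm 1 : E2 →L[ℂ] E2) + ((Sm 1).symm : E2 →L[ℂ] E2)) := by
      rw [ContinuousLinearMap.isSelfAdjoint_iff', map_add, adjoint_lie (Sm 1),
        adjoint_lie (Sm 1).symm, LinearIsometryEquiv.symm_symm]
      exact add_comm _ _
    exact h1.add (mulOp_selfAdjoint (V x) C (hCV x))
  -- covariance for powers of T : conjugation by the shift unit
  have horb : ∀ m : ℤ, Hop ((T ^ m) ω₀)
      = (↑(SmU m) : E2 →L[ℂ] E2) * Hop ω₀ * (↑(SmU m)⁻¹ : E2 →L[ℂ] E2) := by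
    intro m
    ext ψ n
    have ht : ((T ^ (n + m)) ω₀) = (T ^ n) ((T ^ m) ω₀) := by rw [zpow_add]; rfl
    simp only [ContinuousLinearMap.mul_apply, SmU_val, SmU_inv,
      LinearIsometryEquiv.coe_coe'', Sm_apply, Sm_symm_apply, hHop, ht]
    ring_nf
  -- units for `z` and `conj z` at `ω₀`
  have hzu : IsUnit (algebraMap ℂ (E2 →L[ℂ] E2) z - Hop ω₀) := by
    rwa [spectrum.notMem_iff] at hz0
  have hzu' : IsUnit (algebraMap ℂ (E2 →L[ℂ] E2) (starRingEnd ℂ z) - Hop ω₀) := by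
    have h := hzu.star
    rwa [star_sub, ← algebraMap_star_comm, (hsa ω₀).star_eq, Complex.star_def] at h
  obtain ⟨B₀, hB₀⟩ := hzu
  obtain ⟨B₁, hB₁⟩ := hzu'
  -- general lower bound for units
  have hlb0 : ∀ (B : (E2 →L[ℂ] E2)ˣ) (ψ : E2),
      ‖ψ‖ ≤ ‖(↑B⁻¹ : E2 →L[ℂ] E2)‖ * ‖(↑B : E2 →L[ℂ] E2) ψ‖ := by
    intro B ψ
    calc ‖ψ‖ = ‖(↑B⁻¹ : E2 →L[ℂ] E2) ((↑B : E2 →L[ℂ] E2) ψ)‖ := by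
          rw [← ContinuousLinearMap.mul_apply, Units.inv_mul, ContinuousLinearMap.one_apply]
      _ ≤ _ := ContinuousLinearMap.le_opNorm _ _
  -- transfer of `z - H` along the orbit
  have hconj : ∀ (m : ℤ) (zz : ℂ), algebraMap ℂ (E2 →L[ℂ] E2) zz - Hop ((T ^ m) ω₀)
      = (↑(SmU m) : E2 →L[ℂ] E2) * (algebraMap ℂ (E2 →L[ℂ] E2) zz - Hop ω₀)
          * (↑(SmU m)⁻¹ : E2 →L[ℂ] E2) := by
    intro m zz
    rw [horb m, mul_sub, sub_mul]
    congr 1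
    calc algebraMap ℂ (E2 →L[ℂ] E2) zz
        = algebraMap ℂ (E2 →L[ℂ] E2) zz
            * ((↑(SmU m) : E2 →L[ℂ] E2) * (↑(SmU m)⁻¹ : E2 →L[ℂ] E2)) := by
          rw [Units.mul_inv, mul_one]
      _ = (↑(SmU m) : E2 →L[ℂ] E2) * algebraMap ℂ (E2 →L[ℂ] E2) zz
            * (↑(SmU m)⁻¹ : E2 →L[ℂ] E2) := by rw [← mul_assoc, ← Algebra.commutes]
  -- uniform lower bound along the orbit
  have hlbm : ∀ (m : ℤ) (zz : ℂ) (B : (E2 →L[ℂ] E2)ˣ)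
      (hB : (↑B : E2 →L[ℂ] E2) = algebraMap ℂ (E2 →L[ℂ] E2) zz - Hop ω₀) (ψ : E2),
      ‖ψ‖ ≤ ‖(↑B⁻¹ : E2 →L[ℂ] E2)‖
        * ‖(algebraMap ℂ (E2 →L[ℂ] E2) zz - Hop ((T ^ m) ω₀)) ψ‖ := by
    intro m zz B hB ψ
    rw [hconj m zz, ← hB, ContinuousLinearMap.mul_apply, ContinuousLinearMap.mul_apply,
      SmU_val, SmU_inv, LinearIsometryEquiv.coe_coe'', LinearIsometryEquiv.coe_coe'',
      (Sm m).norm_map]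
    calc ‖ψ‖ = ‖(Sm m).symm ψ‖ := ((Sm m).symm.norm_map ψ).symm
      _ ≤ _ := hlb0 B ((Sm m).symm ψ)
  -- a sequence in the orbit converging to ω
  have hexists : ∀ k : ℕ, ∃ m : ℤ, dist ((T ^ m) ω₀) ω < 1 / (k + 1) := by
    intro k
    have hωcl : ω ∈ closure {x : Ω | ∃ n : ℤ, (T ^ n) ω₀ = x} := hdense ω
    rw [Metric.mem_closure_iff] at hωcl
    obtain ⟨y, hy, hdy⟩ := hωcl (1 / (k + 1)) (by positivity)
    obtain ⟨m, rfl⟩ := hy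
    exact ⟨m, by rwa [dist_comm]⟩
  choose g hg using hexists
  have hgt : Tendsto (fun k : ℕ => (T ^ g k) ω₀) atTop (𝓝 ω) := by
    rw [tendsto_iff_dist_tendsto_zero]
    exact squeeze_zero (fun k => dist_nonneg) (fun k => (hg k).le)
      tendsto_one_div_add_atTop_nhds_zero_nat
  have hC0 : 0 ≤ C := le_trans (abs_nonneg _) (hC ω)
  -- strong convergence of the operators along the sequence
  have hstrongψ : ∀ ψ : E2,
      Tendsto (fun k : ℕ => Hop ((T ^ g k) ω₀) ψ) atTop (𝓝 (Hop ω ψ)) := by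
    intro ψ
    rw [tendsto_iff_norm_sub_tendsto_zero]
    set d : ℕ → E2 := fun k => Hop ((T ^ g k) ω₀) ψ - Hop ω ψ with hd
    have hdco : ∀ k n, ((d k : E2) : ∀ _ : ℤ, ℂ) n
        = ((V ((T ^ g k) ω₀) n - V ω n : ℝ) : ℂ) * (ψ : ∀ _ : ℤ, ℂ) n := by
      intro k n
      simp only [hd, lp.coeFn_sub, Pi.sub_apply, hHop, hV, Complex.ofReal_sub]
      ring
    have hψsum : Summable fun n : ℤ => ‖(ψ : ∀ _ : ℤ, ℂ) n‖ ^ (2 : ℝ) := by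
      have := lp.hasSum_norm (p := 2) (f := ψ) (by norm_num)
      rw [ENNReal.toReal_ofNat] at this
      exact this.summable
    have hsum0 : Tendsto
        (fun k : ℕ => ∑' n : ℤ, ‖((d k : E2) : ∀ _ : ℤ, ℂ) n‖ ^ (2 : ℝ)) atTop (𝓝 0) := by
      have h0 : (0 : ℝ) = ∑' _n : ℤ, (0 : ℝ) := by simp
      rw [h0]
      refine tendsto_tsum_of_dominated_convergence
        (bound := fun n : ℤ => (2 * C) ^ (2 : ℝ) * ‖(ψ : ∀ _ : ℤ, ℂ) n‖ ^ (2 : ℝ))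
        (hψsum.mul_left _) (fun n => ?_) (Eventually.of_forall fun k n => ?_)
      · -- pointwise convergence to 0
        have hV0 : Tendsto (fun k : ℕ => V ((T ^ g k) ω₀) n - V ω n) atTop (𝓝 0) := by
          have hc : Tendsto (fun k : ℕ => V ((T ^ g k) ω₀) n) atTop (𝓝 (V ω n)) :=
            ((hf.comp (contZ n)).tendsto ω).comp hgt
          simpa using hc.sub (tendsto_const_nhds (x := V ω n))
        have : Tendsto (fun k : ℕ => ‖((d k : E2) : ∀ _ : ℤ, ℂ) n‖) atTop (𝓝 0) := by
          simp only [hdco]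
          have := ((Complex.continuous_ofReal.tendsto 0).comp hV0).mul
            (tendsto_const_nhds (x := (ψ : ∀ _ : ℤ, ℂ) n))
          simpa using this.norm
        have h2 := this.rpow_const (p := (2 : ℝ)) (Or.inr (by norm_num))
        simpa [Real.zero_rpow] using h2
      · -- uniform bound
        have hb : ‖((d k : E2) : ∀ _ : ℤ, ℂ) n‖ ≤ 2 * C * ‖(ψ : ∀ _ : ℤ, ℂ) n‖ := by
          rw [hdco, norm_mul, Complex.norm_real, Real.norm_eq_abs]
          have : |V ((T ^ g k) ω₀) n - V ω n| ≤ 2 * C := by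
            have h1 := hC ((T ^ (n : ℤ)) ((T ^ g k) ω₀))
            have h2 := hC ((T ^ (n : ℤ)) ω)
            calc |V ((T ^ g k) ω₀) n - V ω n|
                ≤ |V ((T ^ g k) ω₀) n| + |V ω n| := abs_sub _ _
              _ ≤ C + C := add_le_add h1 h2
              _ = 2 * C := by ring
          gcongr
        rw [Real.norm_eq_abs, abs_of_nonneg (by positivity)]
        calc ‖((d k : E2) : ∀ _ : ℤ, ℂ) n‖ ^ (2 : ℝ)
            ≤ (2 * C * ‖(ψ : ∀ _ : ℤ, ℂ) n‖) ^ (2 : ℝ) :=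
              Real.rpow_le_rpow (norm_nonneg _) hb (by norm_num)
          _ = (2 * C) ^ (2 : ℝ) * ‖(ψ : ∀ _ : ℤ, ℂ) n‖ ^ (2 : ℝ) :=
              Real.mul_rpow (by positivity) (norm_nonneg _)
    have hnorm : (fun k : ℕ => ‖d k‖)
        = fun k : ℕ => (∑' n : ℤ, ‖((d k : E2) : ∀ _ : ℤ, ℂ) n‖ ^ (2 : ℝ)) ^ (1 / (2 : ℝ)) := by
      funext k
      rw [lp.norm_eq_tsum_rpow (by norm_num) (d k), ENNReal.toReal_ofNat]
    rw [hnorm]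
    have := hsum0.rpow_const (p := 1 / (2 : ℝ)) (Or.inr (by norm_num))
    simpa [Real.zero_rpow] using this
  -- lower bounds for `z - H_ω` and `conj z - H_ω`
  have hlim : ∀ (zz : ℂ) (ψ : E2),
      Tendsto (fun k : ℕ => (algebraMap ℂ (E2 →L[ℂ] E2) zz - Hop ((T ^ g k) ω₀)) ψ) atTop
        (𝓝 ((algebraMap ℂ (E2 →L[ℂ] E2) zz - Hop ω) ψ)) := by
    intro zz ψ
    simp only [ContinuousLinearMap.sub_apply]
    exact tendsto_const_nhds.sub (hstrongψ ψ)
  have hlow : ∀ (zz : ℂ) (B : (E2 →L[ℂ] E2)ˣ)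
      (hB : (↑B : E2 →L[ℂ] E2) = algebraMap ℂ (E2 →L[ℂ] E2) zz - Hop ω₀) (ψ : E2),
      ‖ψ‖ ≤ ‖(↑B⁻¹ : E2 →L[ℂ] E2)‖ * ‖(algebraMap ℂ (E2 →L[ℂ] E2) zz - Hop ω) ψ‖ := by
    intro zz B hB ψ
    have ht : Tendsto
        (fun k : ℕ => ‖(↑B⁻¹ : E2 →L[ℂ] E2)‖
          * ‖(algebraMap ℂ (E2 →L[ℂ] E2) zz - Hop ((T ^ g k) ω₀)) ψ‖) atTop
        (𝓝 (‖(↑B⁻¹ : E2 →L[ℂ] E2)‖ * ‖(algebraMap ℂ (E2 →L[ℂ] E2) zz - Hop ω) ψ‖)) :=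
      ((hlim zz ψ).norm).const_mul _
    exact ge_of_tendsto ht (Eventually.of_forall fun k => hlbm (g k) zz B hB ψ)
  -- `z - H_ω` is invertible: contradiction
  set Bop : E2 →L[ℂ] E2 := algebraMap ℂ (E2 →L[ℂ] E2) z - Hop ω with hBop
  have hanti : AntilipschitzWith (‖(↑B₀⁻¹ : E2 →L[ℂ] E2)‖.toNNReal) Bop :=
    ContinuousLinearMap.antilipschitz_of_bound Bop (fun ψ => by
      rw [Real.coe_toNNReal _ (norm_nonneg _)]; exact hlow z B₀ hB₀ ψ)
  have hadj : ContinuousLinearMap.adjoint Bop = algebraMap ℂ (E2 →L[ℂ] E2) (starRingEnd ℂ z) - Hop ω := by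
    rw [← ContinuousLinearMap.star_eq_adjoint, hBop, star_sub, ← algebraMap_star_comm,
      (hsa ω).star_eq, Complex.star_def]
  have hclosed : IsClosed ((LinearMap.range (Bop : E2 →ₗ[ℂ] E2) : Submodule ℂ E2) : Set E2) := by
    rw [LinearMap.coe_range]
    exact hanti.isClosed_range Bop.uniformContinuous
  haveI hcs : CompleteSpace (LinearMap.range (Bop : E2 →ₗ[ℂ] E2)) := hclosed.completeSpace_coe
  have hrange : LinearMap.range (Bop : E2 →ₗ[ℂ] E2) = ⊤ := by
    rw [← Submodule.orthogonal_eq_bot_iff, Submodule.eq_bot_iff]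
    intro φ hφ
    have hzero : ContinuousLinearMap.adjoint Bop φ = 0 := by
      rw [← inner_self_eq_zero (𝕜 := ℂ)]
      rw [ContinuousLinearMap.adjoint_inner_left, inner_eq_zero_symm]
      exact (Submodule.mem_orthogonal _ φ).1 hφ _ (LinearMap.mem_range_self _ _)
    have hb := hlow (starRingEnd ℂ z) B₁ hB₁ φ
    rw [← hadj, hzero, norm_zero, mul_zero] at hb
    exact norm_le_zero_iff.1 hb
  have hker : LinearMap.ker (Bop : E2 →ₗ[ℂ] E2) = ⊥ := by
    rw [LinearMap.ker_eq_bot]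
    exact hanti.injective
  have hunitB : IsUnit Bop := by
    let e := ContinuousLinearEquiv.ofBijective Bop hker hrange
    refine ⟨⟨Bop, (e.symm : E2 →L[ℂ] E2), ?_, ?_⟩, rfl⟩
    · refine ContinuousLinearMap.ext fun ψ => ?_
      show e (e.symm ψ) = ψ
      exact e.apply_symm_apply ψ
    · refine ContinuousLinearMap.ext fun ψ => ?_
      show e.symm (e ψ) = ψ
      exact e.symm_apply_apply ψ
  exact spectrum.mem_iff.1 hz hunitB
end
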